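/- arXiv:math/0607352 — 12 statements merged into one kernel-verified Lean document; each statement's English description precedes it below -/
import Mathlib

section
/- Let G and H be locally finite simple graphs and let α be an H-labeling of G. Then for every vertex (u,i) of G⋈_α H, the degree of (u,i) in G⋈_α H equals the sum, over all vertices v of G such that v is adjacent to u in G and α(u,{v,u}) is adjacent to i in H, of val(α(v,{v,u})). -/
open Finset Filter

open scoped Classical

universe u v

variable {V : Type u} {W : Type v}

/-- The generalized zig-zag product of an `H`-labeled graph `(G, α)` with `H`.
The labeling `α : D(G) → V(H)` is encoded as `α : V → V → W`, where for adjacent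
vertices `u, v` the value `α u v` represents `α(u, {u,v})`. -/
def zigzag (G : SimpleGraph V) (H : SimpleGraph W) (α : V → V → W) :
    SimpleGraph (V × W) where
  Adj p q := G.Adj p.1 q.1 ∧ H.Adj (α p.1 q.1) p.2 ∧ H.Adj (α q.1 p.1) q.2
  symm := ⟨fun _ _ h => ⟨h.1.symm, h.2.2, h.2.1⟩⟩
  loopless := ⟨fun p h => G.loopless.irrefl p.1 h.1⟩

/-- The vertex set of the zig-zag product `G ⋈_α H`:
pairs `(u, i)` such that some edge `e` of `G` is incident to `u` with `i`
adjacent to `α(u, e)` in `H`. -/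
def zigzagVerts (G : SimpleGraph V) (H : SimpleGraph W) (α : V → V → W) :
    Set (V × W) :=
  {p | ∃ w, G.Adj p.1 w ∧ H.Adj (α p.1 w) p.2}

/-- For locally finite simple graphs `G`, `H` and an `H`-labeling `α`
of `G`, the degree of a vertex `(u, i)` of `G ⋈_α H` is the sum, over all `v` adjacent
to `u` in `G` with `α(u, {v,u})` adjacent to `i` in `H`, of `val(α(v, {v,u}))`. -/
theorem zigzag_degree (G : SimpleGraph V) (H : SimpleGraph W) (α : V → V → W)
    [∀ x : V, Fintype (G.neighborSet x)] [∀ h : W, Fintype (H.neighborSet h)]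
    (u : V) (i : W) (hu : (u, i) ∈ zigzagVerts G H α)
    [Fintype ((zigzag G H α).neighborSet (u, i))] :
    (zigzag G H α).degree (u, i) =
      ∑ w ∈ (G.neighborFinset u).filter (fun w => H.Adj (α u w) i),
        H.degree (α w u) := by
  classical
  have hset : (zigzag G H α).neighborFinset (u, i) =
      ((G.neighborFinset u).filter (fun w => H.Adj (α u w) i)).biUnion
        (fun v => (H.neighborFinset (α v u)).image (Prod.mk v)) := by
    ext ⟨v, j⟩
    rw [SimpleGraph.mem_neighborFinset]
    simp only [SimpleGraph.mem_neighborFinset, mem_biUnion, mem_filter, mem_image,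
      zigzag, Prod.mk.injEq]
    constructor
    · rintro ⟨h1, h2, h3⟩
      exact ⟨v, ⟨h1, h2⟩, j, h3, rfl, rfl⟩
    · rintro ⟨v', ⟨h1, h2⟩, j', h3, rfl, rfl⟩
      exact ⟨h1, h2, h3⟩
  rw [← SimpleGraph.card_neighborFinset_eq_degree, hset,
    card_biUnion]
  · refine Finset.sum_congr rfl fun v _ => ?_
    rw [card_image_of_injective _ (fun a b h => by simpa using h),
      SimpleGraph.card_neighborFinset_eq_degree]
  · intro a _ b _ hab
    simp only [disjoint_left, mem_image]
    rintro ⟨x, y⟩ ⟨j, _, h⟩ ⟨j', _, h'⟩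
    exact hab ((Prod.mk.injEq .. ▸ h).1.trans (Prod.mk.injEq .. ▸ h').1.symm)
end

section
/- Let G be a finite simple graph, H a locally finite simple graph, and α an H-labeling of G. Then the number of edges of G⋈_α H equals the sum over all edges e = {u,v} of G of val(α(u,e)) · val(α(v,e)). -/
open Finset Filter

open scoped Classical

universe u v

variable {V : Type u} {W : Type v}

lemma zz_fiber_eq (G : SimpleGraph V) (H : SimpleGraph W) (α : V → V → W)
    {u v : V} (huv : G.Adj u v) :
    {z ∈ (zigzag G H α).edgeSet | Sym2.map Prod.fst z = s(u, v)} =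
      (fun p : W × W => s((u, p.1), (v, p.2))) ''
        ((H.neighborSet (α u v)) ×ˢ (H.neighborSet (α v u))) := by
  ext z
  induction z using Sym2.inductionOn with
  | hf p q =>
    simp only [Set.mem_setOf_eq, Set.mem_image, Set.mem_prod, SimpleGraph.mem_edgeSet,
      Sym2.map_pair_eq, Sym2.eq_iff, SimpleGraph.mem_neighborSet]
    constructor
    · rintro ⟨⟨hG, h1, h2⟩, (⟨hpu, hqv⟩ | ⟨hpv, hqu⟩)⟩
      · refine ⟨(p.2, q.2), ⟨?_, ?_⟩, ?_⟩
        · rw [← hpu, ← hqv]; exact h1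
        · rw [← hpu, ← hqv]; exact h2
        · left; constructor <;> [skip; skip] <;> ext <;> simp [hpu, hqv]
      · refine ⟨(q.2, p.2), ⟨?_, ?_⟩, ?_⟩
        · rw [← hpv, ← hqu]; exact h2
        · rw [← hpv, ← hqu]; exact h1
        · right; constructor <;> ext <;> simp [hpv, hqu]
    · rintro ⟨⟨i, j⟩, ⟨hi, hj⟩, (⟨h1, h2⟩ | ⟨h1, h2⟩)⟩
      · rw [← h1, ← h2]
        exact ⟨⟨huv, hi, hj⟩, Or.inl ⟨rfl, rfl⟩⟩
      · rw [← h1, ← h2]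
        exact ⟨⟨huv.symm, hj, hi⟩, Or.inr ⟨rfl, rfl⟩⟩

lemma zz_fiber_finite (G : SimpleGraph V) (H : SimpleGraph W)
    (hH : ∀ h : W, (H.neighborSet h).Finite) (α : V → V → W)
    {e : Sym2 V} (he : e ∈ G.edgeSet) :
    {z ∈ (zigzag G H α).edgeSet | Sym2.map Prod.fst z = e}.Finite := by
  induction e using Sym2.inductionOn with
  | hf u v =>
    rw [zz_fiber_eq G H α he]
    exact (((hH _).prod (hH _)).image _)

lemma zz_fiber_ncard (G : SimpleGraph V) (H : SimpleGraph W)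
    (hH : ∀ h : W, (H.neighborSet h).Finite) (α : V → V → W)
    {e : Sym2 V} (he : e ∈ G.edgeSet) :
    {z ∈ (zigzag G H α).edgeSet | Sym2.map Prod.fst z = e}.ncard =
      Sym2.lift ⟨fun a b => (H.neighborSet (α a b)).ncard * (H.neighborSet (α b a)).ncard,
        fun a b => mul_comm _ _⟩ e := by
  induction e using Sym2.inductionOn with
  | hf u v =>
    rw [zz_fiber_eq G H α he, Set.ncard_image_of_injOn,
      Set.ncard_eq_toFinset_card _ ((hH _).prod (hH _)), ← Set.Finite.toFinset_prod (hH _) (hH _),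
      Finset.card_product, ← Set.ncard_eq_toFinset_card _ (hH _), ← Set.ncard_eq_toFinset_card _ (hH _)]
    · simp
    · rintro ⟨a, b⟩ - ⟨c, d⟩ - hcd
      simp only [Sym2.eq_iff, Prod.mk.injEq] at hcd
      rcases hcd with ⟨⟨-, h1⟩, -, h2⟩ | ⟨⟨h1, -⟩, -⟩
      · simp [h1, h2]
      · exact absurd h1 he.ne

/-- For a finite simple graph `G`, a locally finite simple graph `H`
and an `H`-labeling `α` of `G`, the number of edges of `G ⋈_α H` equals the sum over
all edges `e = {u,v}` of `G` of `val(α(u,e)) · val(α(v,e))`. -/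
theorem zigzag_edge_count [Fintype V] (G : SimpleGraph V) (H : SimpleGraph W)
    (hH : ∀ h : W, (H.neighborSet h).Finite) (α : V → V → W) :
    ((zigzag G H α).edgeSet).ncard =
      ∑ e ∈ G.edgeSet.toFinset,
        Sym2.lift ⟨fun a b => (H.neighborSet (α a b)).ncard * (H.neighborSet (α b a)).ncard,
          fun a b => mul_comm _ _⟩ e := by
  have hmem : ∀ z ∈ (zigzag G H α).edgeSet, Sym2.map Prod.fst z ∈ G.edgeSet := by
    intro z hz
    induction z using Sym2.inductionOn with
    | hf p q => exact hz.1
  have hT : ((zigzag G H α).edgeSet).Finite := by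
    have : (zigzag G H α).edgeSet ⊆
        ⋃ e ∈ G.edgeSet.toFinset, {z ∈ (zigzag G H α).edgeSet | Sym2.map Prod.fst z = e} := by
      intro z hz
      simp only [Set.mem_iUnion, Set.mem_setOf_eq]
      exact ⟨_, by simpa using hmem z hz, hz, rfl⟩
    exact Set.Finite.subset (Set.Finite.biUnion (G.edgeSet.toFinset.finite_toSet)
      (fun e he => zz_fiber_finite G H hH α (by simpa using he))) this
  rw [Set.ncard_eq_toFinset_card _ hT,
    Finset.card_eq_sum_card_fiberwise (f := Sym2.map Prod.fst) (t := G.edgeSet.toFinset)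
      (fun z hz => by simpa using hmem z (by simpa using hz))]
  refine Finset.sum_congr rfl fun e he => ?_
  rw [← zz_fiber_ncard G H hH α (by simpa using he), ← Set.ncard_coe_finset]
  congr 1
  ext z
  simp [Set.mem_setOf_eq]
end

section
/- Let G be a finite simple graph with no isolated vertices, H a locally finite simple graph, and α a locally constant H-labeling of G such that val(h) = k ≥ 1 for every h in the image of α. Then there exist at least k^{|V(G)|} distinct subsets S of V(G⋈_α H) such that the subgraph of G⋈_α H induced on S is isomorphic to G. -/
open Finset Filter

open scoped Classical

universe u v

variable {V : Type u} {W : Type v}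

/-- If `G` is a finite simple graph with no isolated vertices, `H` is a
locally finite simple graph and `α` is a locally constant `H`-labeling of `G` with
`val(h) = k ≥ 1` for every `h` in the image of `α`, then there are at least
`k ^ |V(G)|` distinct subsets of `V(G ⋈_α H)` whose induced subgraph is isomorphic
to `G`. -/
theorem zigzag_many_copies [Fintype V] (G : SimpleGraph V) (H : SimpleGraph W)
    (hG : ∀ x : V, ∃ y, G.Adj x y)
    (hH : ∀ h : W, (H.neighborSet h).Finite)
    (α : V → V → W)
    (hlc : ∀ x y z : V, G.Adj x y → G.Adj x z → α x y = α x z)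
    (k : ℕ) (hk : 1 ≤ k)
    (hval : ∀ x y : V, G.Adj x y → (H.neighborSet (α x y)).ncard = k) :
    ∃ 𝒮 : Finset (Set (V × W)),
      k ^ Fintype.card V ≤ 𝒮.card ∧
      ∀ S ∈ 𝒮, S ⊆ zigzagVerts G H α ∧
        Nonempty ((zigzag G H α).induce S ≃g G) := by

  classical
  set β : V → W := fun u => α u (Classical.choose (hG u)) with hβ
  have hβadj : ∀ u v, G.Adj u v → α u v = β u := fun u v huv =>
    hlc u v _ huv (Classical.choose_spec (hG u))
  have hNfin : ∀ u : V, (H.neighborSet (β u)).Finite := fun u => hH _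
  let N : V → Finset W := fun u => (hNfin u).toFinset
  have hNmem : ∀ u w, w ∈ N u ↔ H.Adj (β u) w := by
    intro u w
    simp [N, SimpleGraph.mem_neighborSet]
  have hNcard : ∀ u, (N u).card = k := by
    intro u
    have h1 := hval u (Classical.choose (hG u)) (Classical.choose_spec (hG u))
    rw [Set.ncard_eq_toFinset_card _ (hNfin u)] at h1
    exact h1
  let F : (V → W) → Set (V × W) := fun f => Set.range (fun u => (u, f u))
  have hFinj : Function.Injective F := by
    intro f g hfg
    funext u
    have : (u, f u) ∈ F g := hfg ▸ ⟨u, rfl⟩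
    obtain ⟨u', hu'⟩ := this
    have h1 : u' = u := congrArg Prod.fst hu'
    subst h1
    exact (congrArg Prod.snd hu').symm
  refine ⟨(Fintype.piFinset N).image F, ?_, ?_⟩
  · rw [Finset.card_image_of_injective _ hFinj, Fintype.card_piFinset]
    simp [hNcard]
  · intro S hS
    obtain ⟨f, hf, rfl⟩ := Finset.mem_image.mp hS
    rw [Fintype.mem_piFinset] at hf
    have hfadj : ∀ u, H.Adj (β u) (f u) := fun u => (hNmem u (f u)).mp (hf u)
    constructor
    · rintro p ⟨u, rfl⟩
      exact ⟨Classical.choose (hG u), Classical.choose_spec (hG u), hfadj u⟩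
    · refine ⟨⟨⟨fun p => p.1.1, fun u => ⟨(u, f u), ⟨u, rfl⟩⟩, ?_, fun u => rfl⟩, ?_⟩⟩
      · rintro ⟨p, u, rfl⟩
        rfl
      · rintro ⟨p, u, rfl⟩ ⟨q, v, rfl⟩
        show G.Adj u v ↔ (zigzag G H α).Adj (u, f u) (v, f v)
        show G.Adj u v ↔ (G.Adj u v ∧ H.Adj (α u v) (f u) ∧ H.Adj (α v u) (f v))
        constructor
        · intro huv
          exact ⟨huv, by rw [hβadj u v huv]; exact hfadj u,
            by rw [hβadj v u huv.symm]; exact hfadj v⟩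
        · exact fun h => h.1
end

section
/- Let G and H be locally finite simple graphs, G with no isolated vertices, and let α be a locally constant H-labeling of G such that val(h) = n ≥ 1 for every h in the image of α. Suppose f ∈ ℓ²(V(G)) satisfies Σ_{u ∼ v} f(u) = λ f(v) for every vertex v of G. Define f̂ on V(G⋈_α H) by f̂(u,i) = f(u). Then f̂ ∈ ℓ²(V(G⋈_α H)) with ‖f̂‖² = n‖f‖², and Σ_{(v,j) ∼ (u,i)} f̂(v,j) = nλ · f̂(u,i) for every vertex (u,i) of G⋈_α H; in particular, if f ≠ 0 then f̂ is a nonzero eigenfunction of the adjacency operator of G⋈_α H with eigenvalue nλ. -/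
open Finset Filter

open scoped Classical

universe u v

variable {V : Type u} {W : Type v}

/-- For locally finite `G`, `H`, `G` without isolated vertices, and a
locally constant `H`-labeling `α` with `val(h) = n ≥ 1` on the image of `α`: if
`f ∈ ℓ²(V(G))` satisfies `Σ_{u ∼ v} f u = λ f v` for all `v`, then
`f̂(u,i) = f u` lies in `ℓ²(V(G ⋈_α H))` with `‖f̂‖² = n ‖f‖²` and satisfies
`Σ_{(v,j) ∼ (u,i)} f̂(v,j) = n λ f̂(u,i)`; in particular `f ≠ 0` makes `f̂` a nonzero
eigenfunction of the adjacency operator of `G ⋈_α H` with eigenvalue `n λ`. -/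
theorem zigzag_eigenfunction_lift (G : SimpleGraph V) (H : SimpleGraph W) (α : V → V → W)
    [∀ x : V, Fintype (G.neighborSet x)] [∀ h : W, Fintype (H.neighborSet h)]
    [∀ p : V × W, Fintype ((zigzag G H α).neighborSet p)]
    (hG : ∀ x : V, ∃ y, G.Adj x y)
    (hlc : ∀ x y z : V, G.Adj x y → G.Adj x z → α x y = α x z)
    (n : ℕ) (hn : 1 ≤ n)
    (hval : ∀ x y : V, G.Adj x y → H.degree (α x y) = n)
    (f : V → ℂ) (hf2 : Summable fun x : V => ‖f x‖ ^ 2)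
    (lam : ℂ)
    (heig : ∀ x : V, ∑ y ∈ G.neighborFinset x, f y = lam * f x) :
    Summable (fun p : ↥(zigzagVerts G H α) => ‖f (p : V × W).1‖ ^ 2) ∧
    (∑' p : ↥(zigzagVerts G H α), ‖f (p : V × W).1‖ ^ 2) = (n : ℝ) * ∑' x : V, ‖f x‖ ^ 2 ∧
    (∀ p ∈ zigzagVerts G H α,
      ∑ q ∈ (zigzag G H α).neighborFinset p, f q.1 = (n : ℂ) * lam * f p.1) ∧
    (f ≠ 0 → ∃ p ∈ zigzagVerts G H α, f p.1 ≠ 0) := by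
  choose y hy using hG
  have hα : ∀ u w, G.Adj u w → α u w = α u (y u) := fun u w h => hlc u w (y u) h (hy u)
  have hmem : ∀ p : V × W, p ∈ zigzagVerts G H α ↔ H.Adj (α p.1 (y p.1)) p.2 := by
    intro p
    constructor
    · rintro ⟨w, hw, hi⟩
      rwa [hα _ _ hw] at hi
    · intro h
      exact ⟨y p.1, hy p.1, by rwa [hα _ _ (hy p.1)]⟩
  let e : (Σ u : V, ↥(H.neighborSet (α u (y u)))) ≃ ↥(zigzagVerts G H α) :=
  { toFun := fun s => ⟨(s.1, (s.2 : W)), (hmem _).2 s.2.2⟩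
    invFun := fun p => ⟨(p : V × W).1, ⟨(p : V × W).2, (hmem _).1 p.2⟩⟩
    left_inv := fun s => rfl
    right_inv := fun p => rfl }
  have hsum_fiber : ∀ u : V, ∑' i : ↥(H.neighborSet (α u (y u))), ‖f u‖ ^ 2
      = (n : ℝ) * ‖f u‖ ^ 2 := by
    intro u
    rw [tsum_fintype, Finset.sum_const, Finset.card_univ,
      SimpleGraph.card_neighborSet_eq_degree, hval u (y u) (hy u), nsmul_eq_mul]
  have hS : Summable (fun s : Σ u : V, ↥(H.neighborSet (α u (y u))) => ‖f s.1‖ ^ 2) := by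
    refine (summable_sigma_of_nonneg fun s => by positivity).2 ⟨fun u => ?_, ?_⟩
    · exact Summable.of_finite
    · refine Summable.congr (hf2.mul_left (n : ℝ)) fun u => ?_
      exact (hsum_fiber u).symm
  have h1 : Summable (fun p : ↥(zigzagVerts G H α) => ‖f (p : V × W).1‖ ^ 2) := by
    rw [← Equiv.summable_iff e]
    exact hS
  refine ⟨h1, ?_, ?_, ?_⟩
  · rw [← Equiv.tsum_eq e (fun p : ↥(zigzagVerts G H α) => ‖f (p : V × W).1‖ ^ 2)]
    have : ∑' s : Σ u : V, ↥(H.neighborSet (α u (y u))), ‖f s.1‖ ^ 2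
        = ∑' u : V, ∑' i : ↥(H.neighborSet (α u (y u))), ‖f u‖ ^ 2 := Summable.tsum_sigma' (fun u => Summable.of_finite) hS
    rw [show (fun s : Σ u : V, ↥(H.neighborSet (α u (y u))) =>
        ‖f ((e s : V × W)).1‖ ^ 2) = fun s => ‖f s.1‖ ^ 2 from rfl, this]
    rw [tsum_congr hsum_fiber, tsum_mul_left]
  · rintro ⟨u, i⟩ hp
    have hi : H.Adj (α u (y u)) i := (hmem (u, i)).1 hp
    have hset : (zigzag G H α).neighborFinset (u, i) =
        (G.neighborFinset u).biUnion
          (fun v => (H.neighborFinset (α v u)).image (Prod.mk v)) := by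
      ext q
      simp only [SimpleGraph.mem_neighborFinset, Finset.mem_biUnion, Finset.mem_image,
        SimpleGraph.mem_neighborFinset]
      simp only [zigzag]
      constructor
      · rintro ⟨h1, h2, h3⟩
        exact ⟨q.1, h1, q.2, h3, rfl⟩
      · rintro ⟨v, hv, j, hj, rfl⟩
        refine ⟨hv, ?_, hj⟩
        rwa [hα u v hv]
    have hdisj : (↑(G.neighborFinset u) : Set V).Pairwise fun a b =>
        Disjoint ((H.neighborFinset (α a u)).image (Prod.mk a))
          ((H.neighborFinset (α b u)).image (Prod.mk b)) := by
      intro a _ b _ hab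
      simp only [Finset.disjoint_left, Finset.mem_image]
      rintro q ⟨j, _, rfl⟩ ⟨j', _, h⟩
      exact hab (congrArg Prod.fst h).symm
    rw [hset, Finset.sum_biUnion hdisj]
    have hinner : ∀ v ∈ G.neighborFinset u,
        ∑ q ∈ (H.neighborFinset (α v u)).image (Prod.mk v), f q.1 = (n : ℂ) * f v := by
      intro v hv
      rw [SimpleGraph.mem_neighborFinset] at hv
      rw [Finset.sum_image (fun a _ b _ h => congrArg Prod.snd h)]
      simp only [Finset.sum_const, nsmul_eq_mul]
      rw [show (H.neighborFinset (α v u)).card = n from hval v u hv.symm]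
    rw [Finset.sum_congr rfl hinner, ← Finset.mul_sum, heig u]
    ring
  · intro hf0
    obtain ⟨u, hu⟩ : ∃ u, f u ≠ 0 := by
      by_contra h
      push_neg at h
      exact hf0 (funext h)
    have hdeg : 0 < H.degree (α u (y u)) := by
      rw [hval u (y u) (hy u)]; omega
    obtain ⟨i, hi⟩ := (H.degree_pos_iff_exists_adj _).1 hdeg
    exact ⟨(u, i), (hmem (u, i)).2 hi, hu⟩
end

section
/- Let G and H be locally finite simple graphs and let α be a locally constant H-labeling of G such that val(h) = n ≥ 1 for every h in the image of α. Suppose f̂ ∈ ℓ²(V(G⋈_α H)) is nonzero and satisfies Σ_{(v,j) ∼ (u,i)} f̂(v,j) = λ f̂(u,i) for every vertex (u,i) of G⋈_α H, with λ ≠ 0. Then f̂(u,i) depends only on u, and there exists a nonzero f ∈ ℓ²(V(G)) with f(u) = f̂(u,i) whenever (u,i) ∈ V(G⋈_α H), satisfying Σ_{u ∼ v} f(u) = (λ/n) f(v) for every vertex v of G; that is, λ/n is an eigenvalue of the adjacency operator of G. -/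
open Finset Filter

open scoped Classical

universe u v

variable {V : Type u} {W : Type v}

/-- For locally finite `G`, `H` and a locally constant `H`-labeling `α`
with `val(h) = n ≥ 1` on the image of `α`: if a nonzero `f̂ ∈ ℓ²(V(G ⋈_α H))` satisfies
`Σ_{(v,j) ∼ (u,i)} f̂(v,j) = λ f̂(u,i)` with `λ ≠ 0`, then `f̂(u,i)` depends only on `u`,
and there is a nonzero `f ∈ ℓ²(V(G))` with `f u = f̂(u,i)` whenever `(u,i)` is a vertex
of `G ⋈_α H`, satisfying `Σ_{u ∼ v} f u = (λ/n) f v` for every `v`; that is, `λ/n` is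
an eigenvalue of the adjacency operator of `G`. -/
theorem zigzag_eigenfunction_descend (G : SimpleGraph V) (H : SimpleGraph W) (α : V → V → W)
    [∀ x : V, Fintype (G.neighborSet x)] [∀ h : W, Fintype (H.neighborSet h)]
    [∀ p : V × W, Fintype ((zigzag G H α).neighborSet p)]
    (hlc : ∀ x y z : V, G.Adj x y → G.Adj x z → α x y = α x z)
    (n : ℕ) (hn : 1 ≤ n)
    (hval : ∀ x y : V, G.Adj x y → H.degree (α x y) = n)
    (fh : V × W → ℂ)
    (hf2 : Summable fun p : ↥(zigzagVerts G H α) => ‖fh p‖ ^ 2)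
    (hfne : ∃ p ∈ zigzagVerts G H α, fh p ≠ 0)
    (lam : ℂ) (hlam : lam ≠ 0)
    (heig : ∀ p ∈ zigzagVerts G H α,
      ∑ q ∈ (zigzag G H α).neighborFinset p, fh q = lam * fh p) :
    (∀ (u : V) (i j : W), (u, i) ∈ zigzagVerts G H α → (u, j) ∈ zigzagVerts G H α →
      fh (u, i) = fh (u, j)) ∧
    ∃ f : V → ℂ, Summable (fun x : V => ‖f x‖ ^ 2) ∧ f ≠ 0 ∧
      (∀ (u : V) (i : W), (u, i) ∈ zigzagVerts G H α → f u = fh (u, i)) ∧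
      ∀ x : V, ∑ y ∈ G.neighborFinset x, f y = (lam / (n : ℂ)) * f x := by
  classical
  -- adjacency unfolding
  have hadj : ∀ (p q : V × W), (zigzag G H α).Adj p q ↔
      G.Adj p.1 q.1 ∧ H.Adj (α p.1 q.1) p.2 ∧ H.Adj (α q.1 p.1) q.2 := fun p q => Iff.rfl
  -- A : any vertex (u,i) has i adjacent to the common label
  have hA : ∀ (u : V) (i : W), (u, i) ∈ zigzagVerts G H α →
      ∀ v, G.Adj u v → H.Adj (α u v) i := by
    rintro u i ⟨w, hw, hi⟩ v hv
    rwa [hlc u v w hv hw]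
  -- neighbor finsets are equal for vertices with the same first coordinate
  have hN : ∀ (u : V) (i j : W), (u, i) ∈ zigzagVerts G H α → (u, j) ∈ zigzagVerts G H α →
      (zigzag G H α).neighborFinset (u, i) = (zigzag G H α).neighborFinset (u, j) := by
    intro u i j hi hj
    ext q
    simp only [SimpleGraph.mem_neighborFinset, hadj]
    exact ⟨fun ⟨h1, _, h3⟩ => ⟨h1, hA u j hj q.1 h1, h3⟩,
           fun ⟨h1, _, h3⟩ => ⟨h1, hA u i hi q.1 h1, h3⟩⟩
  have hconst : ∀ (u : V) (i j : W), (u, i) ∈ zigzagVerts G H α →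
      (u, j) ∈ zigzagVerts G H α → fh (u, i) = fh (u, j) := by
    intro u i j hi hj
    have e1 := heig (u, i) hi
    have e2 := heig (u, j) hj
    rw [hN u i j hi hj, e2] at e1
    exact (mul_left_cancel₀ hlam e1).symm
  -- every non-isolated vertex of G gives a vertex of the zig-zag product
  have key : ∀ x : V, (∃ w, G.Adj x w) → ∃ i, (x, i) ∈ zigzagVerts G H α := by
    rintro x ⟨w, hw⟩
    have hpos : 0 < (H.neighborFinset (α x w)).card := by
      rw [SimpleGraph.card_neighborFinset_eq_degree, hval x w hw]; omega
    obtain ⟨i, hi⟩ := Finset.card_pos.mp hpos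
    exact ⟨i, w, hw, (SimpleGraph.mem_neighborFinset ..).mp hi⟩
  obtain ⟨f, hfc, hf0⟩ : ∃ f : V → ℂ,
      (∀ x (h : ∃ w, G.Adj x w), f x = fh (x, (key x h).choose)) ∧
      (∀ x, ¬(∃ w, G.Adj x w) → f x = 0) :=
    ⟨fun x => if h : ∃ w, G.Adj x w then fh (x, (key x h).choose) else 0,
      fun x h => dif_pos h, fun x h => dif_neg h⟩
  have hfeq : ∀ (u : V) (i : W), (u, i) ∈ zigzagVerts G H α → f u = fh (u, i) := by
    intro u i hi
    have h : ∃ w, G.Adj u w := by obtain ⟨w, hw, _⟩ := hi; exact ⟨w, hw⟩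
    rw [hfc u h]
    exact hconst u (key u h).choose i (key u h).choose_spec hi
  have hn0 : (n : ℂ) ≠ 0 := Nat.cast_ne_zero.mpr (by omega)
  refine ⟨hconst, f, ?_, ?_, hfeq, ?_⟩
  · -- summability
    set S : Set V := {x | ∃ w, G.Adj x w} with hS
    have h1 : Summable fun x : ↥S => ‖f x‖ ^ 2 := by
      have hinj : Function.Injective (fun x : ↥S =>
          (⟨(x.1, (key x.1 x.2).choose), (key x.1 x.2).choose_spec⟩ :
            ↥(zigzagVerts G H α))) := by
        intro a b hab
        have : a.1 = b.1 := congrArg (fun p => p.1.1) hab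
        exact Subtype.ext this
      refine (hf2.comp_injective hinj).congr fun x => ?_
      simp only [Function.comp]
      rw [hfc x.1 x.2]
    have h2 : Summable fun x : ↥Sᶜ => ‖f x‖ ^ 2 := by
      refine summable_zero.congr fun x => ?_
      have hx : ¬ ∃ w, G.Adj (x : V) w := x.2
      rw [hf0 x.1 hx]
      simp
    exact summable_subtype_and_compl.mp ⟨h1, h2⟩
  · -- f ≠ 0
    obtain ⟨p, hp, hpne⟩ := hfne
    intro hf00
    apply hpne
    have hmem : (p.1, p.2) ∈ zigzagVerts G H α := hp
    have := hfeq p.1 p.2 hmem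
    rw [show f p.1 = 0 from congrFun hf00 p.1] at this
    rw [show p = (p.1, p.2) from rfl]
    exact this.symm
  · -- eigen equation
    intro x
    by_cases hx : ∃ w, G.Adj x w
    · obtain ⟨i, hxi⟩ := key x hx
      have hsum : ∑ q ∈ (zigzag G H α).neighborFinset (x, i), fh q
          = ∑ v ∈ G.neighborFinset x, ∑ j ∈ H.neighborFinset (α v x), fh (v, j) := by
        rw [← Finset.sum_sigma (G.neighborFinset x)
          (fun v => H.neighborFinset (α v x)) (fun p => fh (p.1, p.2))]
        refine Finset.sum_nbij' (fun q => ⟨q.1, q.2⟩) (fun p => (p.1, p.2)) ?_ ?_ ?_ ?_ ?_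
        · intro q hq
          rw [SimpleGraph.mem_neighborFinset, hadj] at hq
          simp only [Finset.mem_sigma, SimpleGraph.mem_neighborFinset]
          exact ⟨hq.1, hq.2.2⟩
        · intro p hp
          simp only [Finset.mem_sigma, SimpleGraph.mem_neighborFinset] at hp
          rw [SimpleGraph.mem_neighborFinset, hadj]
          exact ⟨hp.1, hA x i hxi p.1 hp.1, hp.2⟩
        · intro a _; rfl
        · intro a _; rfl
        · intro a _; rfl
      have hinner : ∀ v ∈ G.neighborFinset x,
          ∑ j ∈ H.neighborFinset (α v x), fh (v, j) = (n : ℂ) * f v := by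
        intro v hv
        rw [SimpleGraph.mem_neighborFinset] at hv
        have hjs : ∀ j ∈ H.neighborFinset (α v x), fh (v, j) = f v := by
          intro j hj
          rw [SimpleGraph.mem_neighborFinset] at hj
          exact (hfeq v j ⟨x, hv.symm, hj⟩).symm
        rw [Finset.sum_congr rfl hjs, Finset.sum_const,
          SimpleGraph.card_neighborFinset_eq_degree, hval v x hv.symm, nsmul_eq_mul]
      have he := heig (x, i) hxi
      rw [hsum, Finset.sum_congr rfl hinner, ← Finset.mul_sum,
        (hfeq x i hxi).symm] at he
      rw [div_mul_eq_mul_div, eq_div_iff hn0, mul_comm]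
      exact he
    · have hfx : f x = 0 := hf0 x hx
      have hempty : G.neighborFinset x = ∅ := by
        rw [Finset.eq_empty_iff_forall_notMem]
        intro y hy
        rw [SimpleGraph.mem_neighborFinset] at hy
        exact hx ⟨y, hy⟩
      rw [hempty, hfx]
      simp
end

section
/- Let G be an m-regular simple graph with m ≥ 1, let H be a d-regular simple graph on m vertices with d ≥ 1, and let α be an H-labeling of G such that for each vertex u of G the map e ↦ α(u,e) is a bijection from the set of edges incident to u onto V(H). Then sup{ Re⟨Pf,f⟩ / ‖f‖² : f ∈ ℓ²(V(G)), f ≠ 0 } ≤ sup{ Re⟨Qg,g⟩ / ‖g‖² : g ∈ ℓ²(V(G⋈_α H)), g ≠ 0 }, where Pf(v) = (1/m)Σ_{u ∼ v} f(u) and Qg(x) = (1/d²)Σ_{y ∼ x} g(y) are the normalized adjacency operators of G and of G⋈_α H respectively. -/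
open Finset Filter

open scoped Classical

universe u v

variable {V : Type u} {W : Type v}

section Aux

variable {ι : Type*}

/-- Double counting over a symmetric, bounded-degree neighbor structure. -/
lemma aux_nb (N : ι → Finset ι) (hsymm : ∀ i j, j ∈ N i → i ∈ N j)
    (D : ℕ) (hD : ∀ i, (N i).card ≤ D) (a : ι → ℝ) (ha0 : ∀ i, 0 ≤ a i)
    (ha : Summable a) :
    Summable (fun i => ∑ j ∈ N i, a j) ∧
      ∑' i, ∑ j ∈ N i, a j ≤ (D : ℝ) * ∑' i, a i := by
  classical
  set B : ι × ι → ℝ := fun q => if q.1 ∈ N q.2 then a q.1 else 0 with hBdef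
  have hB0 : 0 ≤ B := by
    intro q; by_cases h : q.1 ∈ N q.2 <;> simp [hBdef, h, ha0]
  have hfib : ∀ j, Summable fun i => B (j, i) := by
    intro j
    apply summable_of_ne_finset_zero (s := N j)
    intro i hi
    have hji : j ∉ N i := fun h => hi (hsymm i j h)
    simp [hBdef, hji]
  have hfib_eq : ∀ j, ∑' i, B (j, i) = (N j).card * a j := by
    intro j
    have heq : ∀ i ∈ N j, B (j, i) = a j := fun i hi => by simp [hBdef, hsymm j i hi]
    rw [tsum_eq_sum (s := N j) (fun i hi => by
      have hji : j ∉ N i := fun h => hi (hsymm i j h)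
      simp [hBdef, hji])]
    rw [Finset.sum_congr rfl heq]
    simp [Finset.sum_const, nsmul_eq_mul]
  have hrow : Summable fun j => ∑' i, B (j, i) := by
    apply Summable.of_nonneg_of_le (fun j => tsum_nonneg fun i => hB0 (j, i)) ?_ (ha.mul_left (D:ℝ))
    intro j
    rw [hfib_eq j]
    exact mul_le_mul_of_nonneg_right (by exact_mod_cast hD j) (ha0 j)
  have hBsum : Summable B := (summable_prod_of_nonneg hB0).2 ⟨hfib, hrow⟩
  have hAB : (fun q : ι × ι => if q.2 ∈ N q.1 then a q.2 else 0) =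
      B ∘ (Equiv.prodComm ι ι) := rfl
  have hAsum : Summable fun q : ι × ι => if q.2 ∈ N q.1 then a q.2 else 0 := by
    rw [hAB]; exact (Equiv.prodComm ι ι).summable_iff.2 hBsum
  have hA0 : 0 ≤ fun q : ι × ι => if q.2 ∈ N q.1 then a q.2 else 0 := by
    intro q; by_cases h : q.2 ∈ N q.1 <;> simp [h, ha0]
  have hAfib_eq : ∀ i, (∑' j, if j ∈ N i then a j else 0) = ∑ j ∈ N i, a j := by
    intro i
    rw [tsum_eq_sum (s := N i) (fun j hj => by simp [hj])]
    exact Finset.sum_congr rfl fun j hj => by simp [hj]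
  have h1 : Summable fun i => ∑' j, if j ∈ N i then a j else 0 :=
    ((summable_prod_of_nonneg hA0).1 hAsum).2
  constructor
  · exact (summable_congr fun i => hAfib_eq i).1 h1
  · calc ∑' i, ∑ j ∈ N i, a j
        = ∑' i, ∑' j, (if j ∈ N i then a j else 0) := tsum_congr fun i => (hAfib_eq i).symm
      _ = ∑' q : ι × ι, (if q.2 ∈ N q.1 then a q.2 else 0) :=
          (Summable.tsum_prod' hAsum ((summable_prod_of_nonneg hA0).1 hAsum).1).symm
      _ = ∑' q : ι × ι, B q := by rw [hAB]; exact (Equiv.prodComm ι ι).tsum_eq B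
      _ = ∑' j, ∑' i, B (j, i) := Summable.tsum_prod' hBsum hfib
      _ ≤ ∑' j, (D : ℝ) * a j := by
          refine Summable.tsum_le_tsum (fun j => ?_) hrow (ha.mul_left (D:ℝ))
          rw [hfib_eq j]
          exact mul_le_mul_of_nonneg_right (by exact_mod_cast hD j) (ha0 j)
      _ = (D : ℝ) * ∑' i, a i := tsum_mul_left

/-- Rayleigh quotient bound for a symmetric, bounded-degree neighbor structure. -/
lemma aux_key (N : ι → Finset ι) (hsymm : ∀ i j, j ∈ N i → i ∈ N j)
    (D : ℕ) (hD : ∀ i, (N i).card ≤ D) (z : ℂ) (g : ι → ℂ)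
    (hg : Summable fun i => ‖g i‖ ^ 2) :
    Summable (fun i => (z * ∑ j ∈ N i, g j) * (starRingEnd ℂ) (g i)) ∧
      (∑' i, (z * ∑ j ∈ N i, g j) * (starRingEnd ℂ) (g i)).re ≤
        ‖z‖ * (D : ℝ) * ∑' i, ‖g i‖ ^ 2 := by
  obtain ⟨hnb1, hnb2⟩ := aux_nb N hsymm D hD (fun i => ‖g i‖ ^ 2) (fun i => sq_nonneg _) hg
  set b : ι → ℝ :=
    fun i => (‖z‖ / 2) * ((∑ j ∈ N i, ‖g j‖ ^ 2) + (D : ℝ) * ‖g i‖ ^ 2) with hbdef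
  have hb : Summable b := (hnb1.add (hg.mul_left _)).mul_left _
  have hbound : ∀ i, ‖(z * ∑ j ∈ N i, g j) * (starRingEnd ℂ) (g i)‖ ≤ b i := by
    intro i
    have h1 : ‖(z * ∑ j ∈ N i, g j) * (starRingEnd ℂ) (g i)‖ =
        ‖z‖ * (‖∑ j ∈ N i, g j‖ * ‖g i‖) := by
      simp [mul_assoc]
    rw [h1, hbdef]
    have h2 : ‖∑ j ∈ N i, g j‖ * ‖g i‖ ≤ ∑ j ∈ N i, ‖g j‖ * ‖g i‖ := by
      rw [← Finset.sum_mul]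
      exact mul_le_mul_of_nonneg_right (norm_sum_le _ _) (norm_nonneg _)
    have h3 : ∑ j ∈ N i, ‖g j‖ * ‖g i‖ ≤
        ((∑ j ∈ N i, ‖g j‖ ^ 2) + (D : ℝ) * ‖g i‖ ^ 2) / 2 := by
      have h4 : ∑ j ∈ N i, ‖g j‖ * ‖g i‖ ≤ ∑ j ∈ N i, (‖g j‖ ^ 2 + ‖g i‖ ^ 2) / 2 :=
        Finset.sum_le_sum fun j _ => by nlinarith [sq_nonneg (‖g j‖ - ‖g i‖)]
      refine h4.trans ?_
      rw [← Finset.sum_div, Finset.sum_add_distrib, Finset.sum_const, nsmul_eq_mul]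
      have h5 : ((N i).card : ℝ) * ‖g i‖ ^ 2 ≤ (D : ℝ) * ‖g i‖ ^ 2 :=
        mul_le_mul_of_nonneg_right (by exact_mod_cast hD i) (sq_nonneg _)
      linarith
    calc ‖z‖ * (‖∑ j ∈ N i, g j‖ * ‖g i‖)
        ≤ ‖z‖ * (((∑ j ∈ N i, ‖g j‖ ^ 2) + (D : ℝ) * ‖g i‖ ^ 2) / 2) :=
          mul_le_mul_of_nonneg_left (h2.trans h3) (norm_nonneg z)
      _ = (‖z‖ / 2) * ((∑ j ∈ N i, ‖g j‖ ^ 2) + (D : ℝ) * ‖g i‖ ^ 2) := by ring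
  have hterm : Summable fun i => (z * ∑ j ∈ N i, g j) * (starRingEnd ℂ) (g i) :=
    Summable.of_norm_bounded hb hbound
  have hnorm : Summable fun i => ‖(z * ∑ j ∈ N i, g j) * (starRingEnd ℂ) (g i)‖ :=
    Summable.of_nonneg_of_le (fun i => norm_nonneg _) hbound hb
  refine ⟨hterm, ?_⟩
  have hre : (∑' i, (z * ∑ j ∈ N i, g j) * (starRingEnd ℂ) (g i)).re ≤
      ‖∑' i, (z * ∑ j ∈ N i, g j) * (starRingEnd ℂ) (g i)‖ := by
    exact Complex.re_le_norm _
  refine hre.trans ((norm_tsum_le_tsum_norm hnorm).trans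
    ((Summable.tsum_le_tsum hbound hnorm hb).trans ?_))
  have h5 : ∑' i, b i =
      (‖z‖ / 2) * ((∑' i, ∑ j ∈ N i, ‖g j‖ ^ 2) + (D : ℝ) * ∑' i, ‖g i‖ ^ 2) := by
    rw [hbdef, tsum_mul_left, Summable.tsum_add hnb1 (hg.mul_left _), tsum_mul_left]
  rw [h5]
  have hS0 : (0 : ℝ) ≤ ∑' i, ‖g i‖ ^ 2 := tsum_nonneg fun i => sq_nonneg _
  nlinarith [norm_nonneg z, hnb2, hS0]

end Aux

/-- For an `m`-regular graph `G` (`m ≥ 1`), a `d`-regular graph `H` on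
`m` vertices (`d ≥ 1`), and an `H`-labeling `α` of `G` with each `α(u,·)` a bijection
from the edges at `u` onto `V(H)`, the supremum of the Rayleigh quotients of the
normalized adjacency operator of `G` is at most that of `G ⋈_α H`. -/
theorem zigzag_spectral_radius_le (G : SimpleGraph V) (H : SimpleGraph W) (α : V → V → W)
    [∀ x : V, Fintype (G.neighborSet x)] [Fintype W]
    [∀ p : V × W, Fintype ((zigzag G H α).neighborSet p)]
    (m d : ℕ) (hm : 1 ≤ m) (hd : 1 ≤ d)
    (hGreg : ∀ x : V, G.degree x = m)
    (hWcard : Fintype.card W = m)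
    (hHreg : ∀ h : W, H.degree h = d)
    (hbij : ∀ x : V, Set.BijOn (fun y => α x y) {y | G.Adj x y} Set.univ) :
    sSup {r : ℝ | ∃ f : V → ℂ, Summable (fun x : V => ‖f x‖ ^ 2) ∧ f ≠ 0 ∧
        r = (∑' x : V, ((1 / (m : ℂ)) * ∑ y ∈ G.neighborFinset x, f y) *
              (starRingEnd ℂ) (f x)).re / ∑' x : V, ‖f x‖ ^ 2} ≤
    sSup {r : ℝ | ∃ g : V × W → ℂ,
        Summable (fun p : ↥(zigzagVerts G H α) => ‖g p‖ ^ 2) ∧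
        (∃ p ∈ zigzagVerts G H α, g p ≠ 0) ∧
        r = (∑' p : ↥(zigzagVerts G H α),
              ((1 / ((d : ℂ) ^ 2)) * ∑ q ∈ (zigzag G H α).neighborFinset (p : V × W), g q) *
                (starRingEnd ℂ) (g (p : V × W))).re /
            ∑' p : ↥(zigzagVerts G H α), ‖g (p : V × W)‖ ^ 2} := by
  classical
  by_cases hVe : IsEmpty V
  · have h1 : {r : ℝ | ∃ f : V → ℂ, Summable (fun x : V => ‖f x‖ ^ 2) ∧ f ≠ 0 ∧
        r = (∑' x : V, ((1 / (m : ℂ)) * ∑ y ∈ G.neighborFinset x, f y) *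
              (starRingEnd ℂ) (f x)).re / ∑' x : V, ‖f x‖ ^ 2} = ∅ := by
      ext r
      simp only [Set.mem_setOf_eq, Set.mem_empty_iff_false, iff_false]
      rintro ⟨f, -, hf0, -⟩
      exact hf0 (funext fun x => (hVe.false x).elim)
    have h2 : {r : ℝ | ∃ g : V × W → ℂ,
        Summable (fun p : ↥(zigzagVerts G H α) => ‖g p‖ ^ 2) ∧
        (∃ p ∈ zigzagVerts G H α, g p ≠ 0) ∧
        r = (∑' p : ↥(zigzagVerts G H α),
              ((1 / ((d : ℂ) ^ 2)) * ∑ q ∈ (zigzag G H α).neighborFinset (p : V × W), g q) *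
                (starRingEnd ℂ) (g (p : V × W))).re /
            ∑' p : ↥(zigzagVerts G H α), ‖g (p : V × W)‖ ^ 2} = ∅ := by
      ext r
      simp only [Set.mem_setOf_eq, Set.mem_empty_iff_false, iff_false]
      rintro ⟨g, -, ⟨p, -, -⟩, -⟩
      exact hVe.false p.1
    rw [h1, h2]
  · have hV : Nonempty V := not_isEmpty_iff.mp hVe
    have hm0 : m ≠ 0 := by omega
    have hd0 : d ≠ 0 := by omega
    have hmR : ((m : ℝ)) ≠ 0 := Nat.cast_ne_zero.mpr hm0
    have hdR : ((d : ℝ)) ≠ 0 := Nat.cast_ne_zero.mpr hd0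
    have hdC : ((d : ℂ)) ≠ 0 := Nat.cast_ne_zero.mpr hd0
    have hmC : ((m : ℂ)) ≠ 0 := Nat.cast_ne_zero.mpr hm0
    -- every pair is a vertex of the zig-zag product
    have hZ : ∀ p : V × W, p ∈ zigzagVerts G H α := by
      rintro ⟨u, i⟩
      have hdegi : 0 < H.degree i := by rw [hHreg i]; exact hd
      obtain ⟨j, hj⟩ := (H.degree_pos_iff_exists_adj i).1 hdegi
      obtain ⟨w, hw, hww⟩ := (hbij u).surjOn (Set.mem_univ j)
      refine ⟨w, hw, ?_⟩
      simp only at hww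
      rw [hww]
      exact hj.symm
    -- symmetry of the neighbor structure
    have hsymmN : ∀ p q : V × W, q ∈ (zigzag G H α).neighborFinset p →
        p ∈ (zigzag G H α).neighborFinset q := by
      intro p q h
      rw [SimpleGraph.mem_neighborFinset] at h ⊢
      exact h.symm
    have hadj : ∀ p q : V × W, (zigzag G H α).Adj p q ↔
        (G.Adj p.1 q.1 ∧ H.Adj (α p.1 q.1) p.2 ∧ H.Adj (α q.1 p.1) q.2) := fun p q => Iff.rfl
    -- structure of the neighbor finset in the zig-zag product
    have hNbr : ∀ (u : V) (i : W), (zigzag G H α).neighborFinset (u, i) =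
        ((G.neighborFinset u).filter fun v => H.Adj (α u v) i).biUnion
          (fun v => (H.neighborFinset (α v u)).map
            ⟨fun j => (v, j), fun a b hab => by simpa using congrArg Prod.snd hab⟩) := by
      intro u i
      ext ⟨v, j⟩
      simp only [SimpleGraph.mem_neighborFinset, hadj, Finset.mem_biUnion, Finset.mem_filter,
        Finset.mem_map, Function.Embedding.coeFn_mk, Prod.mk.injEq]
      constructor
      · rintro ⟨h1, h2, h3⟩
        exact ⟨v, ⟨h1, h2⟩, j, h3, rfl⟩
      · rintro ⟨v', ⟨hv', h2⟩, j', hj', rfl, rfl⟩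
        exact ⟨hv', h2, hj'⟩
    have hdisj : ∀ (u : V) (i : W),
        (↑((G.neighborFinset u).filter fun v => H.Adj (α u v) i) : Set V).PairwiseDisjoint
          (fun v => (H.neighborFinset (α v u)).map
            (⟨fun j => (v, j), fun a b hab => by simpa using congrArg Prod.snd hab⟩ :
              W ↪ V × W)) := by
      intro u i x _ y _ hxy
      simp only [Function.onFun]
      rw [Finset.disjoint_left]
      rintro ⟨a, b⟩ ha hb
      simp only [Finset.mem_map, Function.Embedding.coeFn_mk, Prod.mk.injEq] at ha hb
      obtain ⟨j1, -, h1⟩ := ha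
      obtain ⟨j2, -, h⟩ := hb
      exact hxy (congrArg Prod.fst (h1.trans h.symm))
    have hcard_filter : ∀ (u : V) (i : W),
        ((G.neighborFinset u).filter fun v => H.Adj (α u v) i).card ≤ d := by
      intro u i
      have h1 : ((G.neighborFinset u).filter fun v => H.Adj (α u v) i).card ≤
          (H.neighborFinset i).card := by
        apply Finset.card_le_card_of_injOn (fun v => α u v)
        · intro v hv
          rw [Finset.mem_coe, Finset.mem_filter] at hv
          rw [Finset.mem_coe, SimpleGraph.mem_neighborFinset]
          exact hv.2.symm
        · intro x hx y hy hxy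
          have hx' : x ∈ {y | G.Adj u y} := by
            simp only [Finset.coe_filter, Set.mem_setOf_eq, SimpleGraph.mem_neighborFinset] at hx
            exact hx.1
          have hy' : y ∈ {y | G.Adj u y} := by
            simp only [Finset.coe_filter, Set.mem_setOf_eq, SimpleGraph.mem_neighborFinset] at hy
            exact hy.1
          exact (hbij u).injOn hx' hy' hxy
      refine h1.trans ?_
      exact le_of_eq (hHreg i)
    have hdeg : ∀ p : V × W, ((zigzag G H α).neighborFinset p).card ≤ d ^ 2 := by
      rintro ⟨u, i⟩
      rw [hNbr u i]
      refine (Finset.card_biUnion_le).trans ?_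
      have hcards : ∀ v ∈ (G.neighborFinset u).filter fun v => H.Adj (α u v) i,
          ((H.neighborFinset (α v u)).map
            (⟨fun j => (v, j), fun a b hab => by simpa using congrArg Prod.snd hab⟩ :
              W ↪ V × W)).card = d := by
        intro v _
        rw [Finset.card_map]
        exact hHreg (α v u)
      calc ∑ v ∈ (G.neighborFinset u).filter fun v => H.Adj (α u v) i,
            ((H.neighborFinset (α v u)).map
              (⟨fun j => (v, j), fun a b hab => by simpa using congrArg Prod.snd hab⟩ :
                W ↪ V × W)).card
          = ∑ _v ∈ (G.neighborFinset u).filter fun v => H.Adj (α u v) i, d :=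
            Finset.sum_congr rfl hcards
        _ = ((G.neighborFinset u).filter fun v => H.Adj (α u v) i).card * d := by
            rw [Finset.sum_const, smul_eq_mul]
        _ ≤ d * d := Nat.mul_le_mul_right d (hcard_filter u i)
        _ = d ^ 2 := (sq d).symm
    -- the neighbor sum in the zig-zag product
    have hNsum : ∀ (ψ : V × W → ℂ) (u : V) (i : W),
        (∑ q ∈ (zigzag G H α).neighborFinset (u, i), ψ q) =
          ∑ v ∈ (G.neighborFinset u).filter (fun v => H.Adj (α u v) i),
            ∑ j ∈ H.neighborFinset (α v u), ψ (v, j) := by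
      intro ψ u i
      rw [hNbr u i, Finset.sum_biUnion (hdisj u i)]
      refine Finset.sum_congr rfl fun v _ => ?_
      rw [Finset.sum_map]
      rfl
    -- upper bound: every element of the RHS set is at most 1
    have hbdd : BddAbove {r : ℝ | ∃ g : V × W → ℂ,
        Summable (fun p : ↥(zigzagVerts G H α) => ‖g p‖ ^ 2) ∧
        (∃ p ∈ zigzagVerts G H α, g p ≠ 0) ∧
        r = (∑' p : ↥(zigzagVerts G H α),
              ((1 / ((d : ℂ) ^ 2)) * ∑ q ∈ (zigzag G H α).neighborFinset (p : V × W), g q) *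
                (starRingEnd ℂ) (g (p : V × W))).re /
            ∑' p : ↥(zigzagVerts G H α), ‖g (p : V × W)‖ ^ 2} := by
      refine ⟨1, ?_⟩
      rintro r ⟨g, hg, ⟨p₀, -, hp₀⟩, rfl⟩
      have hg' : Summable fun p : V × W => ‖g p‖ ^ 2 :=
        ((Equiv.subtypeUnivEquiv hZ).summable_iff
          (f := fun p : V × W => ‖g p‖ ^ 2)).1 hg
      obtain ⟨hF, hFle⟩ := aux_key (ι := V × W) (fun p => (zigzag G H α).neighborFinset p) hsymmN (d ^ 2)
        hdeg (1 / (d : ℂ) ^ 2) g hg'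
      have hz : ‖(1 : ℂ) / (d : ℂ) ^ 2‖ * ((d ^ 2 : ℕ) : ℝ) = 1 := by
        rw [norm_div, norm_one, norm_pow, Complex.norm_natCast]
        push_cast
        field_simp
      have hnum2 : (∑' p : V × W,
          ((1 / ((d : ℂ) ^ 2)) * ∑ q ∈ (zigzag G H α).neighborFinset p, g q) *
            (starRingEnd ℂ) (g p)).re ≤ ∑' p : V × W, ‖g p‖ ^ 2 := by
        refine hFle.trans (le_of_eq ?_)
        rw [hz, one_mul]
      have hnumS : (∑' p : ↥(zigzagVerts G H α),
            ((1 / ((d : ℂ) ^ 2)) * ∑ q ∈ (zigzag G H α).neighborFinset (p : V × W), g q) *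
              (starRingEnd ℂ) (g (p : V × W)))
          = ∑' p : V × W,
            ((1 / ((d : ℂ) ^ 2)) * ∑ q ∈ (zigzag G H α).neighborFinset p, g q) *
              (starRingEnd ℂ) (g p) :=
        (Equiv.subtypeUnivEquiv hZ).tsum_eq (fun p : V × W =>
            ((1 / ((d : ℂ) ^ 2)) * ∑ q ∈ (zigzag G H α).neighborFinset p, g q) *
              (starRingEnd ℂ) (g p))
      have hdenS : (∑' p : ↥(zigzagVerts G H α), ‖g (p : V × W)‖ ^ 2)
          = ∑' p : V × W, ‖g p‖ ^ 2 :=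
        (Equiv.subtypeUnivEquiv hZ).tsum_eq (fun p : V × W => ‖g p‖ ^ 2)
      have hden_pos : 0 < ∑' p : ↥(zigzagVerts G H α), ‖g (p : V × W)‖ ^ 2 := by
        rw [hdenS]
        exact Summable.tsum_pos hg' (fun p => sq_nonneg _) p₀ (pow_pos (norm_pos_iff.2 hp₀) 2)
      rw [div_le_one hden_pos, hnumS, hdenS]
      exact hnum2
    -- the LHS set is nonempty
    have hne : {r : ℝ | ∃ f : V → ℂ, Summable (fun x : V => ‖f x‖ ^ 2) ∧ f ≠ 0 ∧
        r = (∑' x : V, ((1 / (m : ℂ)) * ∑ y ∈ G.neighborFinset x, f y) *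
              (starRingEnd ℂ) (f x)).re / ∑' x : V, ‖f x‖ ^ 2}.Nonempty := by
      obtain ⟨x₀⟩ := hV
      refine ⟨_, (fun x => if x = x₀ then 1 else 0 : V → ℂ), ?_, ?_, rfl⟩
      · apply summable_of_ne_finset_zero (s := {x₀})
        intro x hx
        simp only [Finset.mem_singleton] at hx
        simp [hx]
      · intro h
        have h0 := congrFun h x₀
        simp at h0
    refine csSup_le_csSup hbdd hne ?_
    rintro r ⟨f, hf, hf0, rfl⟩
    set g : V × W → ℂ := fun p => f p.1 with hgdef
    have hg' : Summable fun p : V × W => ‖g p‖ ^ 2 := by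
      rw [← (Equiv.prodComm W V).summable_iff (f := fun p : V × W => ‖g p‖ ^ 2)]
      refine (summable_prod_of_nonneg ?_).2 ⟨?_, ?_⟩
      · intro q; exact sq_nonneg _
      · intro w
        simpa [hgdef] using hf
      · exact Summable.of_finite
    obtain ⟨hF, -⟩ := aux_key (ι := V × W) (fun p => (zigzag G H α).neighborFinset p) hsymmN (d ^ 2)
      hdeg (1 / (d : ℂ) ^ 2) g hg'
    -- per-vertex computation
    have hswap : ∀ u : V,
        (∑ i : W, ∑ v ∈ (G.neighborFinset u).filter (fun v => H.Adj (α u v) i), f v)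
          = (d : ℂ) * ∑ v ∈ G.neighborFinset u, f v := by
      intro u
      simp_rw [Finset.sum_filter]
      rw [Finset.sum_comm]
      have hterm2 : ∀ v ∈ G.neighborFinset u,
          (∑ i : W, if H.Adj (α u v) i then f v else 0) = (d : ℂ) * f v := by
        intro v _
        have hfe : (Finset.univ.filter fun i => H.Adj (α u v) i) = H.neighborFinset (α u v) := by
          ext i
          simp [SimpleGraph.mem_neighborFinset]
        rw [← Finset.sum_filter, hfe, Finset.sum_const,
          show (H.neighborFinset (α u v)).card = d from hHreg _, nsmul_eq_mul]
      rw [Finset.sum_congr rfl hterm2, ← Finset.mul_sum]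
    have hinner : ∀ u : V,
        (∑ i : W, ((1 / ((d : ℂ) ^ 2)) *
            ∑ q ∈ (zigzag G H α).neighborFinset ((u, i) : V × W), g q) *
              (starRingEnd ℂ) (g (u, i)))
          = (m : ℂ) * (((1 / (m : ℂ)) * ∑ y ∈ G.neighborFinset u, f y) *
              (starRingEnd ℂ) (f u)) := by
      intro u
      have h1 : ∀ i : W, ((1 / ((d : ℂ) ^ 2)) *
            ∑ q ∈ (zigzag G H α).neighborFinset ((u, i) : V × W), g q) *
              (starRingEnd ℂ) (g (u, i))
          = ((1 / ((d : ℂ) ^ 2)) * (d : ℂ) * (starRingEnd ℂ) (f u)) *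
              ∑ v ∈ (G.neighborFinset u).filter (fun v => H.Adj (α u v) i), f v := by
        intro i
        rw [hNsum g u i]
        have h2 : ∀ v ∈ (G.neighborFinset u).filter (fun v => H.Adj (α u v) i),
            (∑ j ∈ H.neighborFinset (α v u), g (v, j)) = (d : ℂ) * f v := by
          intro v _
          simp only [hgdef]
          rw [Finset.sum_const, show (H.neighborFinset (α v u)).card = d from hHreg _,
            nsmul_eq_mul]
        rw [Finset.sum_congr rfl h2, ← Finset.mul_sum]
        simp only [hgdef]
        ring
      rw [Finset.sum_congr rfl (fun i _ => h1 i), ← Finset.mul_sum, hswap u]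
      field_simp
    have hnumVW : (∑' p : V × W,
          ((1 / ((d : ℂ) ^ 2)) * ∑ q ∈ (zigzag G H α).neighborFinset p, g q) *
            (starRingEnd ℂ) (g p))
        = (m : ℂ) * ∑' x : V, ((1 / (m : ℂ)) * ∑ y ∈ G.neighborFinset x, f y) *
            (starRingEnd ℂ) (f x) := by
      rw [Summable.tsum_prod' hF (fun u => Summable.of_finite), ← tsum_mul_left]
      refine tsum_congr fun u => ?_
      rw [tsum_fintype]
      exact hinner u
    have hdenVW : (∑' p : V × W, ‖g p‖ ^ 2) = (m : ℝ) * ∑' x : V, ‖f x‖ ^ 2 := by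
      rw [Summable.tsum_prod' hg' (fun u => Summable.of_finite), ← tsum_mul_left]
      refine tsum_congr fun u => ?_
      rw [tsum_fintype]
      simp only [hgdef]
      rw [Finset.sum_const, Finset.card_univ, hWcard, nsmul_eq_mul]
    refine ⟨g, ?_, ?_, ?_⟩
    · exact ((Equiv.subtypeUnivEquiv hZ).summable_iff
        (f := fun p : V × W => ‖g p‖ ^ 2)).2 hg'
    · obtain ⟨x₀, hx₀⟩ : ∃ x, f x ≠ 0 := by
        by_contra h
        push_neg at h
        exact hf0 (funext h)
      have hWne : Nonempty W := Fintype.card_pos_iff.1 (by omega)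
      obtain ⟨w₀⟩ := hWne
      exact ⟨(x₀, w₀), hZ _, by simpa [hgdef] using hx₀⟩
    · have h1 : (∑' p : ↥(zigzagVerts G H α),
            ((1 / ((d : ℂ) ^ 2)) * ∑ q ∈ (zigzag G H α).neighborFinset (p : V × W), g q) *
              (starRingEnd ℂ) (g (p : V × W)))
          = ∑' p : V × W,
            ((1 / ((d : ℂ) ^ 2)) * ∑ q ∈ (zigzag G H α).neighborFinset p, g q) *
              (starRingEnd ℂ) (g p) :=
        (Equiv.subtypeUnivEquiv hZ).tsum_eq (fun p : V × W =>
            ((1 / ((d : ℂ) ^ 2)) * ∑ q ∈ (zigzag G H α).neighborFinset p, g q) *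
              (starRingEnd ℂ) (g p))
      have h2 : (∑' p : ↥(zigzagVerts G H α), ‖g (p : V × W)‖ ^ 2)
          = ∑' p : V × W, ‖g p‖ ^ 2 :=
        (Equiv.subtypeUnivEquiv hZ).tsum_eq (fun p : V × W => ‖g p‖ ^ 2)
      rw [h1, h2, hnumVW, hdenVW]
      generalize (∑' x : V, ((1 / (m : ℂ)) * ∑ y ∈ G.neighborFinset x, f y) *
        (starRingEnd ℂ) (f x)) = numC
      generalize (∑' x : V, ‖f x‖ ^ 2) = denR
      rw [Complex.mul_re, Complex.natCast_re, Complex.natCast_im, zero_mul, sub_zero,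
        mul_div_mul_left _ _ hmR]
end

section
/- Let G be an m-regular simple graph with m ≥ 1, let H be a d-regular simple graph on m vertices with d ≥ 1, and let α be an H-labeling of G such that for each vertex u of G the map e ↦ α(u,e) is a bijection from the set of edges incident to u onto V(H). Let (V_n) be a sequence of nonempty finite subsets of V(G) with ∪_n V_n = V(G) and |∂V_n|/|V_n| → 0. Set S_n = {(u,i) ∈ V(G⋈_α H) : u ∈ V_n}. Then ∪_n S_n = V(G⋈_α H), |S_n| = m·|V_n|, |∂S_n| ≤ d²·|∂V_n| (boundary taken in G⋈_α H), and |∂S_n|/|S_n| → 0; that is, (S_n) is a Følner sequence for G⋈_α H. -/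
open Finset Filter

open scoped Classical

universe u v

variable {V : Type u} {W : Type v}

/-- The edge boundary of a set `S` of vertices: edges of `G` with exactly one
endpoint in `S`. -/
def edgeBoundary (G : SimpleGraph V) (S : Set V) : Set (Sym2 V) :=
  {e | e ∈ G.edgeSet ∧ ∃ x y, e = s(x, y) ∧ x ∈ S ∧ y ∉ S}

lemma ncard_prod_finite {α : Type*} {β : Type*} {s : Set α} {t : Set β}
    (hs : s.Finite) (ht : t.Finite) : (s ×ˢ t).ncard = s.ncard * t.ncard := by
  rw [Set.ncard_eq_toFinset_card _ (hs.prod ht), ← Set.Finite.toFinset_prod hs ht,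
    Finset.card_product, Set.ncard_eq_toFinset_card _ hs, Set.ncard_eq_toFinset_card _ ht]

lemma ncard_le_of_subset_biUnion {α : Type*} {β : Type*} {S : Set α} {A : Set β}
    {T : β → Set α} {k : ℕ} (hA : A.Finite) (hTfin : ∀ b ∈ A, (T b).Finite)
    (hTcard : ∀ b ∈ A, (T b).ncard ≤ k) (hS : S ⊆ ⋃ b ∈ A, T b) :
    S.ncard ≤ k * A.ncard := by
  classical
  have hSfin : S.Finite := (hA.biUnion hTfin).subset hS
  set F : β → Finset α := fun b => ((hSfin.inter_of_left (T b)).toFinset)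
  have hsub : hSfin.toFinset ⊆ hA.toFinset.biUnion F := by
    intro x hx
    have hxS : x ∈ S := by simpa using hx
    obtain ⟨b, hb, hxb⟩ := Set.mem_iUnion₂.mp (hS hxS)
    refine Finset.mem_biUnion.mpr ⟨b, by simpa using hb, ?_⟩
    simp [F, hxS, hxb]
  calc S.ncard = hSfin.toFinset.card := Set.ncard_eq_toFinset_card _ hSfin
    _ ≤ (hA.toFinset.biUnion F).card := Finset.card_le_card hsub
    _ ≤ ∑ b ∈ hA.toFinset, (F b).card := Finset.card_biUnion_le
    _ ≤ ∑ _b ∈ hA.toFinset, k := by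
        refine Finset.sum_le_sum fun b hb => ?_
        have hbA : b ∈ A := by simpa using hb
        have : (F b).card = (S ∩ T b).ncard :=
          (Set.ncard_eq_toFinset_card _ _).symm
        rw [this]
        exact le_trans (Set.ncard_le_ncard Set.inter_subset_right (hTfin b hbA))
          (hTcard b hbA)
    _ = k * A.ncard := by
        rw [Finset.sum_const, smul_eq_mul, mul_comm, Set.ncard_eq_toFinset_card _ hA]

/-- With `G` `m`-regular (`m ≥ 1`), `H` `d`-regular on `m` vertices
(`d ≥ 1`), and `α(u,·)` bijections onto `V(H)`: a Følner sequence `(V_n)` for `G`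
yields the Følner sequence `S_n = {(u,i) ∈ V(G ⋈_α H) : u ∈ V_n}` for `G ⋈_α H`, with
`∪ S_n = V(G ⋈_α H)`, `|S_n| = m |V_n|`, `|∂S_n| ≤ d² |∂V_n|` and `|∂S_n|/|S_n| → 0`. -/
theorem zigzag_folner (G : SimpleGraph V) (H : SimpleGraph W) (α : V → V → W)
    [Fintype W]
    (m d : ℕ) (hm : 1 ≤ m) (hd : 1 ≤ d)
    (hGreg : ∀ x : V, (G.neighborSet x).ncard = m)
    (hWcard : Fintype.card W = m)
    (hHreg : ∀ h : W, (H.neighborSet h).ncard = d)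
    (hbij : ∀ x : V, Set.BijOn (fun y => α x y) {y | G.Adj x y} Set.univ)
    (Vn : ℕ → Finset V) (hne : ∀ n, (Vn n).Nonempty)
    (hcover : ∀ x : V, ∃ n, x ∈ Vn n)
    (htend : Tendsto (fun n => ((edgeBoundary G ↑(Vn n)).ncard : ℝ) / (Vn n).card)
      atTop (nhds 0)) :
    (∀ p ∈ zigzagVerts G H α, ∃ n, p ∈ {q ∈ zigzagVerts G H α | q.1 ∈ Vn n}) ∧
    (∀ n, {q ∈ zigzagVerts G H α | q.1 ∈ Vn n}.ncard = m * (Vn n).card) ∧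
    (∀ n, (edgeBoundary (zigzag G H α) {q ∈ zigzagVerts G H α | q.1 ∈ Vn n}).ncard ≤
      d ^ 2 * (edgeBoundary G ↑(Vn n)).ncard) ∧
    Tendsto (fun n =>
        ((edgeBoundary (zigzag G H α) {q ∈ zigzagVerts G H α | q.1 ∈ Vn n}).ncard : ℝ) /
          ({q ∈ zigzagVerts G H α | q.1 ∈ Vn n}).ncard)
      atTop (nhds 0) := by
  classical
  -- every pair (u,i) is a vertex of the zig-zag product
  have hverts : zigzagVerts G H α = Set.univ := by
    ext p
    simp only [Set.mem_univ, iff_true]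
    obtain ⟨h, hh⟩ : (H.neighborSet p.2).Nonempty :=
      Set.nonempty_of_ncard_ne_zero (by rw [hHreg]; omega)
    obtain ⟨w, hw, hαw⟩ := (hbij p.1).2.2 (Set.mem_univ h)
    have hαw' : α p.1 w = h := hαw
    have hadj2 : H.Adj p.2 h := hh
    exact ⟨w, hw, by rw [hαw']; exact hadj2.symm⟩
  have hmemS : ∀ n (p : V × W),
      p ∈ {q ∈ zigzagVerts G H α | q.1 ∈ Vn n} ↔ p.1 ∈ Vn n := by
    intro n p
    rw [Set.mem_sep_iff, hverts]
    simp
  -- finiteness of neighbor sets and boundaries in G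
  have hGfin : ∀ x : V, (G.neighborSet x).Finite := fun x =>
    Set.finite_of_ncard_ne_zero (by rw [hGreg]; omega)
  have hBfin : ∀ n, (edgeBoundary G ↑(Vn n)).Finite := by
    intro n
    refine Set.Finite.subset ((Vn n).finite_toSet.biUnion
      fun x _ => ((hGfin x).image fun y => s(x, y))) ?_
    rintro e ⟨he, x, y, rfl, hx, hy⟩
    exact Set.mem_iUnion₂.mpr ⟨x, hx, ⟨y, (SimpleGraph.mem_edgeSet _).mp he, rfl⟩⟩
  -- cardinality of S_n
  have hcard : ∀ n, {q ∈ zigzagVerts G H α | q.1 ∈ Vn n}.ncard = m * (Vn n).card := by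
    intro n
    have : {q ∈ zigzagVerts G H α | q.1 ∈ Vn n} =
        ↑((Vn n) ×ˢ (Finset.univ : Finset W)) := by
      ext p
      simp [hmemS n p, Finset.mem_product]
    rw [this, Set.ncard_coe_finset, Finset.card_product, Finset.card_univ, hWcard,
      mul_comm]
  -- boundary bound
  have hbound : ∀ n,
      (edgeBoundary (zigzag G H α) {q ∈ zigzagVerts G H α | q.1 ∈ Vn n}).ncard ≤
        d ^ 2 * (edgeBoundary G ↑(Vn n)).ncard := by
    intro n
    set S := {q ∈ zigzagVerts G H α | q.1 ∈ Vn n}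
    set B := edgeBoundary G ↑(Vn n)
    set T : Sym2 V → Set (Sym2 (V × W)) := fun f =>
      {e ∈ edgeBoundary (zigzag G H α) S | Sym2.map Prod.fst e = f}
    have hsub : edgeBoundary (zigzag G H α) S ⊆ ⋃ f ∈ B, T f := by
      rintro e he
      obtain ⟨hes, p, q, rfl, hp, hq⟩ := he
      have hadj : (zigzag G H α).Adj p q := (SimpleGraph.mem_edgeSet _).mp hes
      refine Set.mem_iUnion₂.mpr ⟨s(p.1, q.1), ?_, ?_⟩
      · exact ⟨(SimpleGraph.mem_edgeSet _).mpr hadj.1, p.1, q.1, rfl,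
          (hmemS n p).mp hp, fun h => hq ((hmemS n q).mpr h)⟩
      · exact ⟨⟨hes, p, q, rfl, hp, hq⟩, Sym2.map_pair_eq _ _ _⟩
    -- each fiber has at most d^2 elements
    have hfiber : ∀ f ∈ B, (T f).Finite ∧ (T f).ncard ≤ d ^ 2 := by
      rintro f ⟨hf, x, y, rfl, hx, hy⟩
      have hN1 : (H.neighborSet (α x y)).Finite := Set.toFinite _
      have hN2 : (H.neighborSet (α y x)).Finite := Set.toFinite _
      have himg : T s(x, y) ⊆
          (fun p : W × W => s((x, p.1), (y, p.2))) ''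
            (H.neighborSet (α x y) ×ˢ H.neighborSet (α y x)) := by
        rintro e ⟨⟨hes, p, q, rfl, hp, hq⟩, hmap⟩
        have hadj : (zigzag G H α).Adj p q := (SimpleGraph.mem_edgeSet _).mp hes
        have hp1 : p.1 ∈ Vn n := (hmemS n p).mp hp
        have hq1 : q.1 ∉ Vn n := fun h => hq ((hmemS n q).mpr h)
        rw [Sym2.map_pair_eq] at hmap
        obtain ⟨hpx, hqy⟩ : p.1 = x ∧ q.1 = y := by
          rcases Sym2.eq_iff.mp hmap with h | h
          · exact h
          · exact absurd (h.1 ▸ hp1) hy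
        subst hpx; subst hqy
        exact ⟨(p.2, q.2), ⟨hadj.2.1, hadj.2.2⟩, by simp⟩
      have hfin2 : ((fun p : W × W => s((x, p.1), (y, p.2))) ''
          (H.neighborSet (α x y) ×ˢ H.neighborSet (α y x))).Finite :=
        (hN1.prod hN2).image _
      refine ⟨hfin2.subset himg, ?_⟩
      calc (T s(x, y)).ncard ≤ _ := Set.ncard_le_ncard himg hfin2
        _ ≤ (H.neighborSet (α x y) ×ˢ H.neighborSet (α y x)).ncard :=
            Set.ncard_image_le (hN1.prod hN2)
        _ = d ^ 2 := by
            rw [ncard_prod_finite hN1 hN2, hHreg, hHreg, sq]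
    exact ncard_le_of_subset_biUnion (hBfin n) (fun b hb => (hfiber b hb).1)
      (fun b hb => (hfiber b hb).2) hsub
  refine ⟨?_, hcard, hbound, ?_⟩
  · intro p _
    obtain ⟨n, hn⟩ := hcover p.1
    exact ⟨n, (hmemS n p).mpr hn⟩
  · -- the ratio tends to 0
    have hpos : ∀ n, (0 : ℝ) < m * (Vn n).card := by
      intro n
      have := (hne n).card_pos
      positivity
    refine tendsto_of_tendsto_of_tendsto_of_le_of_le (g := fun _ => (0 : ℝ))
      (h := fun n => ((d ^ 2 : ℕ) : ℝ) / m *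
        (((edgeBoundary G ↑(Vn n)).ncard : ℝ) / (Vn n).card))
      tendsto_const_nhds ?_ ?_ ?_
    · have := htend.const_mul (((d ^ 2 : ℕ) : ℝ) / m)
      simpa using this
    · intro n
      positivity
    · intro n
      dsimp only
      rw [hcard n]
      have hb : ((edgeBoundary (zigzag G H α)
          {q ∈ zigzagVerts G H α | q.1 ∈ Vn n}).ncard : ℝ) ≤
          ((d ^ 2 : ℕ) : ℝ) * ((edgeBoundary G ↑(Vn n)).ncard : ℝ) := by
        exact_mod_cast hbound n
      calc ((edgeBoundary (zigzag G H α)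
            {q ∈ zigzagVerts G H α | q.1 ∈ Vn n}).ncard : ℝ) / (↑(m * (Vn n).card)) ≤
          (((d ^ 2 : ℕ) : ℝ) * ((edgeBoundary G ↑(Vn n)).ncard : ℝ)) /
            (↑(m * (Vn n).card)) := by
            have hc : (0 : ℝ) < ↑(m * (Vn n).card) :=
              Nat.cast_pos.mpr (Nat.mul_pos (by omega) (hne n).card_pos)
            exact (div_le_div_iff_of_pos_right hc).mpr hb
        _ = ((d ^ 2 : ℕ) : ℝ) / m *
            (((edgeBoundary G ↑(Vn n)).ncard : ℝ) / (Vn n).card) := by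
            push_cast
            rw [div_mul_div_comm]
end

section
/- Let G be an m-regular simple graph with m ≥ 1, let H be a d-regular simple graph on m vertices with d ≥ 1, and let α be an H-labeling of G such that for each vertex u of G the map e ↦ α(u,e) is a bijection from the set of edges incident to u onto V(H). If G is amenable, then G⋈_α H is amenable. -/
open Finset Filter

open scoped Classical

universe u v

variable {V : Type u} {W : Type v}

/-- With `G` `m`-regular (`m ≥ 1`), `H` `d`-regular on `m` vertices
(`d ≥ 1`), and `α(u,·)` bijections onto `V(H)`: if `G` is amenable (admits a Følner
sequence), then so is `G ⋈_α H`. -/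
theorem zigzag_amenable (G : SimpleGraph V) (H : SimpleGraph W) (α : V → V → W)
    [Fintype W]
    (m d : ℕ) (hm : 1 ≤ m) (hd : 1 ≤ d)
    (hGreg : ∀ x : V, (G.neighborSet x).ncard = m)
    (hWcard : Fintype.card W = m)
    (hHreg : ∀ h : W, (H.neighborSet h).ncard = d)
    (hbij : ∀ x : V, Set.BijOn (fun y => α x y) {y | G.Adj x y} Set.univ)
    (hGam : ∃ F : ℕ → Finset V, (∀ n, (F n).Nonempty) ∧ (∀ x : V, ∃ n, x ∈ F n) ∧
      Tendsto (fun n => ((edgeBoundary G ↑(F n)).ncard : ℝ) / (F n).card) atTop (nhds 0)) :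
    ∃ S : ℕ → Finset (V × W), (∀ n, (S n).Nonempty) ∧
      (∀ n, ↑(S n) ⊆ zigzagVerts G H α) ∧
      (∀ p ∈ zigzagVerts G H α, ∃ n, p ∈ S n) ∧
      Tendsto (fun n => ((edgeBoundary (zigzag G H α) ↑(S n)).ncard : ℝ) / (S n).card)
        atTop (nhds 0) := by
  classical
  obtain ⟨F, hFne, hFcov, hFlim⟩ := hGam
  haveI hWne : Nonempty W := Fintype.card_pos_iff.mp (by rw [hWcard]; omega)
  haveI hVne : Nonempty V := ⟨(hFne 0).choose⟩
  -- neighbor sets of G are finite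
  have hGfin : ∀ x : V, (G.neighborSet x).Finite := by
    intro x
    by_contra h
    have : (G.neighborSet x).Infinite := h
    have := this.ncard
    rw [hGreg x] at this
    omega
  -- every vertex of V × W is in zigzagVerts
  have hvert : ∀ p : V × W, p ∈ zigzagVerts G H α := by
    rintro ⟨u, i⟩
    have hne : (H.neighborSet i).Nonempty := by
      apply Set.nonempty_of_ncard_ne_zero
      rw [hHreg]; omega
    obtain ⟨j, hj⟩ := hne
    obtain ⟨w, hw, hαw⟩ := (hbij u).surjOn (Set.mem_univ j)
    exact ⟨w, hw, by simp only at hαw; rw [hαw]; exact hj.symm⟩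
  refine ⟨fun n => F n ×ˢ Finset.univ, ?_, ?_, ?_, ?_⟩
  · intro n
    exact (hFne n).product ⟨Classical.arbitrary W, Finset.mem_univ _⟩
  · intro n p _
    exact hvert p
  · intro p _
    obtain ⟨n, hn⟩ := hFcov p.1
    exact ⟨n, Finset.mem_product.mpr ⟨hn, Finset.mem_univ _⟩⟩
  · -- the key cardinality bound
    have key : ∀ n : ℕ,
        (edgeBoundary (zigzag G H α) ↑(F n ×ˢ (Finset.univ : Finset W))).ncard ≤
          (edgeBoundary G ↑(F n)).ncard * (m * m) := by
      intro n
      set Sv : Set (V × W) := ↑(F n ×ˢ (Finset.univ : Finset W)) with hSv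
      have hSmem : ∀ p : V × W, p ∈ Sv ↔ p.1 ∈ F n := by
        intro p
        simp [hSv, Finset.mem_product]
      set EG : Set (V × V) := {p | G.Adj p.1 p.2 ∧ p.1 ∈ F n ∧ p.2 ∉ F n} with hEG
      -- EG is finite
      have hEGfin : EG.Finite := by
        apply Set.Finite.subset
          ((F n).finite_toSet.biUnion (fun u _ => (Set.finite_singleton u).prod (hGfin u)))
        rintro ⟨u, v⟩ ⟨hadj, hu, hv⟩
        exact Set.mem_biUnion hu ⟨rfl, hadj⟩
      -- EG has the same cardinality as the edge boundary of F n
      have hEGcard : EG.ncard = (edgeBoundary G ↑(F n)).ncard := by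
        have himg : (fun p : V × V => s(p.1, p.2)) '' EG = edgeBoundary G ↑(F n) := by
          ext e
          constructor
          · rintro ⟨⟨u, v⟩, ⟨hadj, hu, hv⟩, rfl⟩
            exact ⟨hadj, u, v, rfl, hu, hv⟩
          · rintro ⟨he, x, y, rfl, hx, hy⟩
            exact ⟨(x, y), ⟨he, hx, hy⟩, rfl⟩
        have hinj : Set.InjOn (fun p : V × V => s(p.1, p.2)) EG := by
          rintro ⟨u, v⟩ ⟨_, hu, hv⟩ ⟨u', v'⟩ ⟨_, hu', hv'⟩ hpq
          simp only [Sym2.eq, Sym2.rel_iff', Prod.mk.injEq, Prod.swap_prod_mk] at hpq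
          rcases hpq with ⟨h1, h2⟩ | ⟨h1, h2⟩
          · simp [h1, h2]
          · subst h1
            exact absurd hu hv'
        rw [← himg, Set.ncard_image_of_injOn hinj]
      -- the injection from the zigzag boundary
      set P : Sym2 (V × W) → Prop := fun e =>
        ∃ pq : (V × W) × (V × W), e = s(pq.1, pq.2) ∧ pq.1 ∈ Sv ∧ pq.2 ∉ Sv with hP
      set f : Sym2 (V × W) → (V × V) × (W × W) := fun e =>
        if h : P e then ((h.choose.1.1, h.choose.2.1), (h.choose.1.2, h.choose.2.2))
        else Classical.arbitrary _ with hf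
      set B : Set (Sym2 (V × W)) := edgeBoundary (zigzag G H α) Sv with hB
      have hPmem : ∀ e ∈ B, P e := by
        rintro e ⟨_, x, y, rfl, hx, hy⟩
        exact ⟨(x, y), rfl, hx, hy⟩
      have hImg : f '' B ⊆ EG ×ˢ (Set.univ : Set (W × W)) := by
        rintro z ⟨e, heB, rfl⟩
        have hpe := hPmem e heB
        obtain ⟨hrep, hin, hout⟩ := hpe.choose_spec
        have hadj : (zigzag G H α).Adj hpe.choose.1 hpe.choose.2 := by
          have := heB.1
          rw [hrep] at this
          exact this
        rw [hf]
        simp only [dif_pos hpe]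
        refine ⟨⟨hadj.1, ?_, ?_⟩, Set.mem_univ _⟩
        · exact (hSmem _).mp hin
        · exact fun h => hout ((hSmem _).mpr h)
      have hInj : Set.InjOn f B := by
        intro e1 h1 e2 h2 hfe
        have hp1 := hPmem e1 h1
        have hp2 := hPmem e2 h2
        rw [hf] at hfe
        simp only [dif_pos hp1, dif_pos hp2, Prod.mk.injEq] at hfe
        obtain ⟨⟨ha1, ha2⟩, hb1, hb2⟩ := hfe
        have e1rep := hp1.choose_spec.1
        have e2rep := hp2.choose_spec.1
        have hc1 : hp1.choose.1 = hp2.choose.1 := Prod.ext_iff.mpr ⟨ha1, hb1⟩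
        have hc2 : hp1.choose.2 = hp2.choose.2 := Prod.ext_iff.mpr ⟨ha2, hb2⟩
        rw [e1rep, e2rep, hc1, hc2]
      calc B.ncard = (f '' B).ncard := (Set.ncard_image_of_injOn hInj).symm
        _ ≤ (EG ×ˢ (Set.univ : Set (W × W))).ncard :=
            Set.ncard_le_ncard hImg (hEGfin.prod (Set.finite_univ))
        _ = EG.ncard * (Set.univ : Set (W × W)).ncard := by
            rw [← Nat.card_coe_set_eq, ← Nat.card_coe_set_eq, ← Nat.card_coe_set_eq,
              Nat.card_congr (Equiv.Set.prod _ _), Nat.card_prod]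
        _ = (edgeBoundary G ↑(F n)).ncard * (m * m) := by
            rw [hEGcard, Set.ncard_univ, Nat.card_eq_fintype_card, Fintype.card_prod, hWcard]
    -- now the limit
    have hcard : ∀ n : ℕ, ((F n ×ˢ (Finset.univ : Finset W)).card : ℝ) = (F n).card * m := by
      intro n
      rw [Finset.card_product, Finset.card_univ, hWcard]
      push_cast
      ring
    apply squeeze_zero (g := fun n => (m : ℝ) * ((edgeBoundary G ↑(F n)).ncard / (F n).card))
    · intro n
      positivity
    · intro n
      have hF0 : (0 : ℝ) < (F n).card := by
        exact_mod_cast Finset.card_pos.mpr (hFne n)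
      have hm0 : (0 : ℝ) < m := by exact_mod_cast hm
      have hden : (0 : ℝ) < ((F n ×ˢ (Finset.univ : Finset W)).card : ℝ) := by
        rw [hcard]; positivity
      rw [div_le_iff₀ hden, hcard]
      have hkey : ((edgeBoundary (zigzag G H α) ↑(F n ×ˢ (Finset.univ : Finset W))).ncard : ℝ) ≤
          ((edgeBoundary G ↑(F n)).ncard : ℝ) * (m * m) := by
        exact_mod_cast key n
      apply hkey.trans
      apply le_of_eq
      have hFne' : ((F n).card : ℝ) ≠ 0 := hF0.ne'
      field_simp
    · have := hFlim.const_mul (m : ℝ)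
      simpa using this
end

section
/- Let H be a simple graph, (G,α) an H-labeled graph, and p : G̃ → G a graph covering map. Define the H-labeling β of G̃ by β(x,{x,y}) = α(p(x),{p(x),p(y)}). Then the map p̂ : G̃⋈_β H → G⋈_α H given by p̂(x,i) = (p(x),i) is a well-defined graph covering map. -/
open Finset Filter

open scoped Classical

universe u v

variable {V : Type u} {W : Type v}

/-- `p : G' → G` is a graph covering map: a graph morphism restricting to a bijection
from `N(x)` onto `N(p x)` for every vertex `x`. -/
def IsGraphCovering {V' : Type*} {V : Type*} (G' : SimpleGraph V') (G : SimpleGraph V)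
    (p : V' → V) : Prop :=
  (∀ x y, G'.Adj x y → G.Adj (p x) (p y)) ∧
  ∀ x : V', Set.BijOn p (G'.neighborSet x) (G.neighborSet (p x))

/-- A graph covering map `p : G̃ → G` of an `H`-labeled graph `(G, α)`
induces, via the `H`-labeling `β(x,{x,y}) = α(p x, {p x, p y})` of `G̃`, a well-defined
graph covering map `p̂(x,i) = (p x, i)` from `G̃ ⋈_β H` to `G ⋈_α H`. -/
theorem zigzag_covering {V' : Type*} (G' : SimpleGraph V') (G : SimpleGraph V)
    (H : SimpleGraph W) (α : V → V → W) (p : V' → V)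
    (hp : IsGraphCovering G' G p) :
    (∀ q ∈ zigzagVerts G' H (fun x y => α (p x) (p y)), (p q.1, q.2) ∈ zigzagVerts G H α) ∧
    IsGraphCovering (zigzag G' H (fun x y => α (p x) (p y))) (zigzag G H α)
      (fun q => (p q.1, q.2)) := by
  obtain ⟨hm, hb⟩ := hp
  refine ⟨?_, ?_, ?_⟩
  · rintro ⟨x, i⟩ ⟨w, hxw, hi⟩
    exact ⟨p w, hm x w hxw, hi⟩
  · rintro ⟨x, i⟩ ⟨y, j⟩ ⟨h1, h2, h3⟩
    exact ⟨hm x y h1, h2, h3⟩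
  · rintro ⟨x, i⟩
    refine ⟨?_, ?_, ?_⟩
    · rintro ⟨y, j⟩ ⟨h1, h2, h3⟩
      exact ⟨hm x y h1, h2, h3⟩
    · rintro ⟨y, j⟩ ⟨h1, h2, h3⟩ ⟨y', j'⟩ ⟨h1', h2', h3'⟩ heq
      have hj : j = j' := congrArg Prod.snd heq
      have hpy : p y = p y' := congrArg Prod.fst heq
      have : y = y' := (hb x).2.1 h1 h1' hpy
      simp [this, hj]
    · rintro ⟨v, j⟩ ⟨h1, h2, h3⟩
      obtain ⟨y, hy, hpy⟩ := (hb x).2.2 h1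
      exact ⟨(y, j), ⟨hy, by simpa [hpy] using h2, by simpa [hpy] using h3⟩,
        by simp [hpy]⟩
end

section
/- Let H be a simple graph, (G,α) an H-labeled graph, and p : G̃ → G a combinatorial covering map with index m. Define the H-labeling β of G̃ by β(x,{x,y}) = α(p(x),{p(x),p(y)}). Then the map p̂ : G̃⋈_β H → G⋈_α H given by p̂(x,i) = (p(x),i) is a well-defined combinatorial covering map with index m. -/
open Finset Filter

open scoped Classical

universe u v

variable {V : Type u} {W : Type v}

/-- `π : G' → G` is a combinatorial covering map with index `m`: a graph morphism such
that (1) every edge `{u,v}` of `G` has exactly `m` edges of `G'` above it, and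
(2) for `π x = π y` and `v` adjacent to `π x`, the sets `N(x) ∩ π⁻¹(v)` and
`N(y) ∩ π⁻¹(v)` have the same cardinality. -/
def IsCombCovering {V' : Type*} {V : Type*} (G' : SimpleGraph V') (G : SimpleGraph V)
    (π : V' → V) (m : ℕ) : Prop :=
  (∀ x y, G'.Adj x y → G.Adj (π x) (π y)) ∧
  (∀ u v, G.Adj u v →
    {e : Sym2 V' | e ∈ G'.edgeSet ∧ ∃ x y, e = s(x, y) ∧ π x = u ∧ π y = v}.ncard = m) ∧
  (∀ x y, π x = π y → ∀ v, G.Adj (π x) v →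
    (G'.neighborSet x ∩ π ⁻¹' {v}).ncard = (G'.neighborSet y ∩ π ⁻¹' {v}).ncard)

/-- A combinatorial covering map `p : G̃ → G` with index `m` of an
`H`-labeled graph `(G, α)` induces, via the `H`-labeling
`β(x,{x,y}) = α(p x, {p x, p y})` of `G̃`, a well-defined combinatorial covering map
`p̂(x,i) = (p x, i)` of index `m` from `G̃ ⋈_β H` to `G ⋈_α H` (as graphs on their
vertex sets). -/
theorem zigzag_comb_covering {V' : Type*} (G' : SimpleGraph V') (G : SimpleGraph V)
    (H : SimpleGraph W) (α : V → V → W) (p : V' → V) (m : ℕ)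
    (hp : IsCombCovering G' G p m) :
    (∀ q ∈ zigzagVerts G' H (fun x y => α (p x) (p y)), (p q.1, q.2) ∈ zigzagVerts G H α) ∧
    ∃ F : ↥(zigzagVerts G' H (fun x y => α (p x) (p y))) → ↥(zigzagVerts G H α),
      (∀ q, (F q : V × W) = (p (q : V' × W).1, (q : V' × W).2)) ∧
      IsCombCovering
        ((zigzag G' H (fun x y => α (p x) (p y))).induce
          (zigzagVerts G' H (fun x y => α (p x) (p y))))
        ((zigzag G H α).induce (zigzagVerts G H α)) F m := by
  classical
  obtain ⟨hmor, hedge, hfib⟩ := hp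
  set β : V' → V' → W := fun x y => α (p x) (p y) with hβ
  have hwd : ∀ q ∈ zigzagVerts G' H β, (p q.1, q.2) ∈ zigzagVerts G H α := by
    rintro ⟨x, i⟩ ⟨w, hxw, hi⟩
    exact ⟨p w, hmor _ _ hxw, hi⟩
  refine ⟨hwd, fun q => ⟨(p q.1.1, q.1.2), hwd q.1 q.2⟩, fun q => rfl, ?_, ?_, ?_⟩
  · -- morphism
    rintro a b ⟨h1, h2, h3⟩
    exact ⟨hmor _ _ h1, h2, h3⟩
  · -- edge counts
    rintro ⟨⟨u₀, i⟩, hu⟩ ⟨⟨v₀, j⟩, hv⟩ ⟨hG, hi, hj⟩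
    -- hG : G.Adj u₀ v₀, hi : H.Adj (α u₀ v₀) i, hj : H.Adj (α v₀ u₀) j
    set S : Set (Sym2 ↥(zigzagVerts G' H β)) :=
      {e | e ∈ ((zigzag G' H β).induce (zigzagVerts G' H β)).edgeSet ∧
        ∃ x y, e = s(x, y) ∧
          (⟨(p (x : V' × W).1, (x : V' × W).2), hwd x.1 x.2⟩ :
            ↥(zigzagVerts G H α)) = ⟨(u₀, i), hu⟩ ∧
          (⟨(p (y : V' × W).1, (y : V' × W).2), hwd y.1 y.2⟩ :
            ↥(zigzagVerts G H α)) = ⟨(v₀, j), hv⟩} with hS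
    set T : Set (Sym2 V') :=
      {e | e ∈ G'.edgeSet ∧ ∃ x y, e = s(x, y) ∧ p x = u₀ ∧ p y = v₀} with hT
    have hne : u₀ ≠ v₀ := hG.ne
    set f : Sym2 ↥(zigzagVerts G' H β) → Sym2 V' :=
      Sym2.map (fun q => (q : V' × W).1) with hf
    have himg : f '' S = T := by
      ext e
      constructor
      · rintro ⟨e', ⟨he', a, b, rfl, ha, hb⟩, rfl⟩
        have ha1 : p (a : V' × W).1 = u₀ ∧ (a : V' × W).2 = i := by
          have := congrArg Subtype.val ha
          exact ⟨congrArg Prod.fst this, congrArg Prod.snd this⟩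
        have hb1 : p (b : V' × W).1 = v₀ ∧ (b : V' × W).2 = j := by
          have := congrArg Subtype.val hb
          exact ⟨congrArg Prod.fst this, congrArg Prod.snd this⟩
        obtain ⟨hadj, -, -⟩ :
            G'.Adj (a : V' × W).1 (b : V' × W).1 ∧ _ ∧ _ := he'
        exact ⟨G'.mem_edgeSet.2 hadj, _, _, rfl, ha1.1, hb1.1⟩
      · rintro ⟨he, x, y, rfl, hx, hy⟩
        have hadj : G'.Adj x y := G'.mem_edgeSet.1 he
        have hxm : ((x, i) : V' × W) ∈ zigzagVerts G' H β := by
          refine ⟨y, hadj, ?_⟩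
          show H.Adj (α (p x) (p y)) i
          rw [hx, hy]; exact hi
        have hym : ((y, j) : V' × W) ∈ zigzagVerts G' H β := by
          refine ⟨x, hadj.symm, ?_⟩
          show H.Adj (α (p y) (p x)) j
          rw [hx, hy]; exact hj
        refine ⟨s(⟨(x, i), hxm⟩, ⟨(y, j), hym⟩), ⟨?_, ⟨(x, i), hxm⟩, ⟨(y, j), hym⟩,
          rfl, ?_, ?_⟩, rfl⟩
        · refine ⟨hadj, ?_, ?_⟩
          · show H.Adj (α (p x) (p y)) i
            rw [hx, hy]; exact hi
          · show H.Adj (α (p y) (p x)) j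
            rw [hx, hy]; exact hj
        · exact Subtype.ext (by simp [hx])
        · exact Subtype.ext (by simp [hy])
    have hinj : Set.InjOn f S := by
      rintro e₁ ⟨-, a₁, b₁, rfl, ha₁, hb₁⟩ e₂ ⟨-, a₂, b₂, rfl, ha₂, hb₂⟩ hfe
      have key : ∀ (a : ↥(zigzagVerts G' H β)),
          ((⟨(p (a : V' × W).1, (a : V' × W).2), hwd a.1 a.2⟩ :
            ↥(zigzagVerts G H α)) = ⟨(u₀, i), hu⟩) →
          p (a : V' × W).1 = u₀ ∧ (a : V' × W).2 = i := by
        intro a ha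
        have := congrArg Subtype.val ha
        exact ⟨congrArg Prod.fst this, congrArg Prod.snd this⟩
      have key' : ∀ (b : ↥(zigzagVerts G' H β)),
          ((⟨(p (b : V' × W).1, (b : V' × W).2), hwd b.1 b.2⟩ :
            ↥(zigzagVerts G H α)) = ⟨(v₀, j), hv⟩) →
          p (b : V' × W).1 = v₀ ∧ (b : V' × W).2 = j := by
        intro b hb
        have := congrArg Subtype.val hb
        exact ⟨congrArg Prod.fst this, congrArg Prod.snd this⟩
      obtain ⟨ha₁1, ha₁2⟩ := key a₁ ha₁
      obtain ⟨hb₁1, hb₁2⟩ := key' b₁ hb₁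
      obtain ⟨ha₂1, ha₂2⟩ := key a₂ ha₂
      obtain ⟨hb₂1, hb₂2⟩ := key' b₂ hb₂
      simp only [hf, Sym2.map_pair_eq, Sym2.eq_iff] at hfe
      rcases hfe with ⟨hxa, hyb⟩ | ⟨hxb, hya⟩
      · have ea : a₁ = a₂ := Subtype.ext (Prod.ext hxa (ha₁2.trans ha₂2.symm))
        have eb : b₁ = b₂ := Subtype.ext (Prod.ext hyb (hb₁2.trans hb₂2.symm))
        rw [ea, eb]
      · exact absurd (ha₁1.symm.trans (by rw [hxb]; exact hb₂1)) hne
    calc S.ncard = (f '' S).ncard := (Set.ncard_image_of_injOn hinj).symm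
      _ = T.ncard := by rw [himg]
      _ = m := hedge u₀ v₀ hG
  · -- fibers
    rintro X Y hXY ⟨⟨v₀, j⟩, hv⟩ hadj
    obtain ⟨hG, hi, hj⟩ :
        G.Adj (p (X : V' × W).1) v₀ ∧ H.Adj (α (p (X : V' × W).1) v₀) (X : V' × W).2 ∧
          H.Adj (α v₀ (p (X : V' × W).1)) j := hadj
    have hXY' := congrArg Subtype.val hXY
    have hp1 : p (X : V' × W).1 = p (Y : V' × W).1 := by
      exact congrArg Prod.fst hXY'
    have hp2 : (X : V' × W).2 = (Y : V' × W).2 := by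
      have h := congrArg (Prod.snd : V × W → W) hXY'
      exact h
    set g : ↥(zigzagVerts G' H β) → V' := fun q => (q : V' × W).1 with hg
    have key : ∀ (Z : ↥(zigzagVerts G' H β)),
        p (Z : V' × W).1 = p (X : V' × W).1 → (Z : V' × W).2 = (X : V' × W).2 →
        g '' (((zigzag G' H β).induce (zigzagVerts G' H β)).neighborSet Z ∩
          (fun q => (⟨(p (q : V' × W).1, (q : V' × W).2), hwd q.1 q.2⟩ :
            ↥(zigzagVerts G H α))) ⁻¹' {⟨(v₀, j), hv⟩}) =
        G'.neighborSet (Z : V' × W).1 ∩ p ⁻¹' {v₀} := by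
      intro Z hZ1 hZ2
      ext z
      constructor
      · rintro ⟨q, ⟨hqadj, hqfib⟩, rfl⟩
        obtain ⟨h1, -, -⟩ :
            G'.Adj (Z : V' × W).1 (q : V' × W).1 ∧ _ ∧ _ := hqadj
        have := congrArg Subtype.val hqfib
        exact ⟨h1, congrArg Prod.fst this⟩
      · rintro ⟨h1, h2⟩
        have h2' : p z = v₀ := h2
        have hzm : ((z, j) : V' × W) ∈ zigzagVerts G' H β := by
          refine ⟨(Z : V' × W).1, G'.adj_symm h1, ?_⟩
          show H.Adj (α (p z) (p (Z : V' × W).1)) j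
          rw [h2', hZ1]; exact hj
        refine ⟨⟨(z, j), hzm⟩, ⟨⟨h1, ?_, ?_⟩, ?_⟩, rfl⟩
        · show H.Adj (α (p (Z : V' × W).1) (p z)) (Z : V' × W).2
          rw [h2', hZ1, hZ2]; exact hi
        · show H.Adj (α (p z) (p (Z : V' × W).1)) j
          rw [h2', hZ1]; exact hj
        · exact Subtype.ext (by simp [h2'])
    have hinj : ∀ (Z : ↥(zigzagVerts G' H β)),
        Set.InjOn g (((zigzag G' H β).induce (zigzagVerts G' H β)).neighborSet Z ∩
          (fun q => (⟨(p (q : V' × W).1, (q : V' × W).2), hwd q.1 q.2⟩ :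
            ↥(zigzagVerts G H α))) ⁻¹' {⟨(v₀, j), hv⟩}) := by
      rintro Z q₁ ⟨-, hq₁⟩ q₂ ⟨-, hq₂⟩ hq
      have e₁ := congrArg Subtype.val hq₁
      have e₂ := congrArg Subtype.val hq₂
      exact Subtype.ext (Prod.ext hq
        ((congrArg Prod.snd e₁).trans (congrArg Prod.snd e₂).symm))
    have hY1 : p (Y : V' × W).1 = p (X : V' × W).1 := hp1.symm
    have hY2 : (Y : V' × W).2 = (X : V' × W).2 := hp2.symm
    calc _ = (G'.neighborSet (X : V' × W).1 ∩ p ⁻¹' {v₀}).ncard := by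
          rw [← key X rfl rfl, Set.ncard_image_of_injOn (hinj X)]
      _ = (G'.neighborSet (Y : V' × W).1 ∩ p ⁻¹' {v₀}).ncard :=
          hfib _ _ hp1 v₀ hG
      _ = _ := by rw [← key Y hY1 hY2, Set.ncard_image_of_injOn (hinj Y)]
end

section
/- Let G and H be locally finite simple graphs and let α be a locally constant H-labeling of G such that val(h) = n for every h in the image of α. Then the projection π : G⋈_α H → G, (u,i) ↦ u, is a combinatorial covering map with index n²; moreover, for every vertex (u,i) of G⋈_α H and every vertex v of G adjacent to u, |N(u,i) ∩ π⁻¹(v)| = n. -/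
open Finset Filter

open scoped Classical

universe u v

variable {V : Type u} {W : Type v}

lemma zigzag_adj_iff (G : SimpleGraph V) (H : SimpleGraph W) (α : V → V → W)
    (p q : V × W) : (zigzag G H α).Adj p q ↔
      G.Adj p.1 q.1 ∧ H.Adj (α p.1 q.1) p.2 ∧ H.Adj (α q.1 p.1) q.2 := Iff.rfl

/-- The fiber-neighbor count lemma. -/
lemma zigzag_fiber_ncard (G : SimpleGraph V) (H : SimpleGraph W) (α : V → V → W)
    (hlc : ∀ x y z : V, G.Adj x y → G.Adj x z → α x y = α x z)
    (q : ↥(zigzagVerts G H α)) (x : V) (h : G.Adj (q : V × W).1 x) :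
    (((zigzag G H α).induce (zigzagVerts G H α)).neighborSet q ∩
        (fun q : ↥(zigzagVerts G H α) => (q : V × W).1) ⁻¹' {x}).ncard
      = (H.neighborSet (α x (q : V × W).1)).ncard := by
  obtain ⟨⟨u, i⟩, w, hw, hwi⟩ := q
  simp only at h ⊢
  have hui : H.Adj (α u x) i := by rw [← hlc u w x hw h]; exact hwi
  set S : Set ↥(zigzagVerts G H α) :=
    ((zigzag G H α).induce (zigzagVerts G H α)).neighborSet ⟨(u, i), w, hw, hwi⟩ ∩
      (fun q : ↥(zigzagVerts G H α) => (q : V × W).1) ⁻¹' {x} with hS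
  have himg : Subtype.val '' S = Prod.mk x '' (H.neighborSet (α x u)) := by
    ext p
    constructor
    · rintro ⟨⟨⟨a, b⟩, hab⟩, ⟨hadj, hx⟩, rfl⟩
      simp only [Set.mem_preimage, Set.mem_singleton_iff] at hx
      subst hx
      rcases hadj with ⟨_, _, hb⟩
      exact ⟨b, hb, rfl⟩
    · rintro ⟨j, hj, rfl⟩
      have hmem : (x, j) ∈ zigzagVerts G H α := ⟨u, h.symm, hj⟩
      refine ⟨⟨(x, j), hmem⟩, ⟨⟨h, hui, hj⟩, rfl⟩, rfl⟩
  have h1 : (Subtype.val '' S).ncard = S.ncard :=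
    Set.ncard_image_of_injective S Subtype.val_injective
  have h2 : (Prod.mk x '' (H.neighborSet (α x u))).ncard
      = (H.neighborSet (α x u)).ncard :=
    Set.ncard_image_of_injective _ (fun a b hab => (Prod.ext_iff.mp hab).2)
  rw [← h1, himg, h2]

/-- For locally finite `G`, `H` and a locally constant `H`-labeling
`α` with `val(h) = n` on the image of `α`, the projection `π : G ⋈_α H → G`,
`(u,i) ↦ u`, is a combinatorial covering map with index `n²`; moreover for each vertex
`(u,i)` of `G ⋈_α H` and each `v` adjacent to `u`, `|N(u,i) ∩ π⁻¹(v)| = n`. -/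
theorem zigzag_projection_comb_covering (G : SimpleGraph V) (H : SimpleGraph W)
    (α : V → V → W)
    (hGlf : ∀ x : V, (G.neighborSet x).Finite) (hHlf : ∀ h : W, (H.neighborSet h).Finite)
    (hlc : ∀ x y z : V, G.Adj x y → G.Adj x z → α x y = α x z)
    (n : ℕ) (hval : ∀ x y : V, G.Adj x y → (H.neighborSet (α x y)).ncard = n) :
    IsCombCovering ((zigzag G H α).induce (zigzagVerts G H α)) G
      (fun q => (q : V × W).1) (n ^ 2) ∧
    ∀ q : ↥(zigzagVerts G H α), ∀ x : V, G.Adj (q : V × W).1 x →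
      (((zigzag G H α).induce (zigzagVerts G H α)).neighborSet q ∩
        (fun q : ↥(zigzagVerts G H α) => (q : V × W).1) ⁻¹' {x}).ncard = n := by
  have key : ∀ q : ↥(zigzagVerts G H α), ∀ x : V, G.Adj (q : V × W).1 x →
      (((zigzag G H α).induce (zigzagVerts G H α)).neighborSet q ∩
        (fun q : ↥(zigzagVerts G H α) => (q : V × W).1) ⁻¹' {x}).ncard = n := by
    intro q x h
    rw [zigzag_fiber_ncard G H α hlc q x h]
    exact hval x _ h.symm
  refine ⟨⟨?_, ?_, ?_⟩, key⟩
  · rintro x y hadj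
    exact hadj.1
  · intro u v huv
    set E : Set (Sym2 ↥(zigzagVerts G H α)) :=
      {e | e ∈ ((zigzag G H α).induce (zigzagVerts G H α)).edgeSet ∧
        ∃ x y, e = s(x, y) ∧ (x : V × W).1 = u ∧ (y : V × W).1 = v} with hE
    set P : Set (W × W) :=
      (H.neighborSet (α u v)) ×ˢ (H.neighborSet (α v u)) with hP
    have hne : u ≠ v := huv.ne
    set f : W × W → Sym2 (V × W) := fun p => s((u, p.1), (v, p.2)) with hf
    have himg : Sym2.map Subtype.val '' E = f '' P := by
      ext e
      constructor
      · rintro ⟨e', ⟨hedge, x, y, rfl, hx, hy⟩, rfl⟩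
        obtain ⟨⟨a, b⟩, ha⟩ := x
        obtain ⟨⟨c, d⟩, hc⟩ := y
        simp only at hx hy
        subst hx; subst hy
        have hadj := hedge
        rw [SimpleGraph.mem_edgeSet] at hadj
        rcases hadj with ⟨_, h1, h2⟩
        exact ⟨(b, d), ⟨h1, h2⟩, rfl⟩
      · rintro ⟨⟨i, j⟩, ⟨hi, hj⟩, rfl⟩
        have hmu : (u, i) ∈ zigzagVerts G H α := ⟨v, huv, hi⟩
        have hmv : (v, j) ∈ zigzagVerts G H α := ⟨u, huv.symm, hj⟩
        refine ⟨s(⟨(u, i), hmu⟩, ⟨(v, j), hmv⟩), ⟨?_, ⟨(u,i),hmu⟩, ⟨(v,j),hmv⟩, rfl, rfl, rfl⟩, rfl⟩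
        rw [SimpleGraph.mem_edgeSet]
        exact ⟨huv, hi, hj⟩
    have hInjf : Function.Injective f := by
      rintro ⟨i, j⟩ ⟨i', j'⟩ hij
      simp only [hf, Sym2.eq_iff, Prod.mk.injEq] at hij
      rcases hij with ⟨⟨_, h1⟩, ⟨_, h2⟩⟩ | ⟨⟨h1, _⟩, _⟩
      · simp [h1, h2]
      · exact absurd h1 hne
    have h1 : (Sym2.map Subtype.val '' E).ncard = E.ncard :=
      Set.ncard_image_of_injective E (Sym2.map.injective Subtype.val_injective)
    have h2 : (f '' P).ncard = P.ncard := Set.ncard_image_of_injective P hInjf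
    have h3 : P.ncard = n * n := by
      rw [hP, ← Nat.card_coe_set_eq, Nat.card_congr (Equiv.Set.prod _ _), Nat.card_prod,
        Nat.card_coe_set_eq, Nat.card_coe_set_eq, hval u v huv, hval v u huv.symm]
    calc E.ncard = (Sym2.map Subtype.val '' E).ncard := h1.symm
      _ = (f '' P).ncard := by rw [himg]
      _ = P.ncard := h2
      _ = n * n := h3
      _ = n ^ 2 := (sq n).symm
  · intro x y hxy vv hadj
    have hxy' : (x : V × W).1 = (y : V × W).1 := hxy
    have hadj' : G.Adj (x : V × W).1 vv := hadj
    rw [key x vv hadj', key y vv (hxy' ▸ hadj')]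
end

section
/- Let G and H be locally finite simple graphs and let α be a locally constant H-labeling of G such that val(h) = m for every h in the image of α. Define recursively: Δ₁ = G and α₁ = α; Δ_{n+1} = Δ_n ⋈_{α_n} H, π_{n+1} : Δ_{n+1} → Δ_n the first-coordinate projection (u,i) ↦ u, and α_{n+1}(x,{x,y}) = α_n(π_{n+1}(x),{π_{n+1}(x),π_{n+1}(y)}). Then for every n ≥ 1, π_{n+1} : Δ_{n+1} → Δ_n is a combinatorial covering map. -/
open Finset Filter

open scoped Classical

universe u v

variable {V : Type u} {W : Type v}

/-- An `H`-labeled graph: a vertex type, a simple graph on it and an `H`-labeling. -/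
structure LabGraph (W : Type u) : Type (u + 1) where
  V : Type u
  G : SimpleGraph V
  lab : V → V → W

/-- One step of the zig-zag tower: pass from `(Δ, α)` to `Δ ⋈_α H` (on its vertex set)
with the labeling `α'(x,{x,y}) = α(π x, {π x, π y})` pulled back along the
first-coordinate projection `π`. -/
def stepLG {W : Type u} (H : SimpleGraph W) (X : LabGraph W) : LabGraph W where
  V := ↥(zigzagVerts X.G H X.lab)
  G := (zigzag X.G H X.lab).induce (zigzagVerts X.G H X.lab)
  lab := fun x y => X.lab x.val.1 y.val.1

/-- The first-coordinate projection `π : Δ ⋈_α H → Δ`. -/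
def projLG {W : Type u} (H : SimpleGraph W) (X : LabGraph W) : (stepLG H X).V → X.V :=
  fun q => q.val.1

/-- The zig-zag tower `Δ₁ = (G, α)`, `Δ_{n+1} = Δ_n ⋈_{α_n} H` (here indexed from `0`). -/
def towerLG {W : Type u} (H : SimpleGraph W) (X : LabGraph W) : ℕ → LabGraph W
  | 0 => X
  | n + 1 => stepLG H (towerLG H X n)

section Aux
variable {W : Type u} (H : SimpleGraph W)

lemma step_adj (X : LabGraph W) (a b : (stepLG H X).V) :
    (stepLG H X).G.Adj a b ↔
      X.G.Adj a.val.1 b.val.1 ∧ H.Adj (X.lab a.val.1 b.val.1) a.val.2 ∧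
        H.Adj (X.lab b.val.1 a.val.1) b.val.2 := Iff.rfl

lemma step_comb_covering (X : LabGraph W) (m : ℕ)
    (hlc : ∀ x y z, X.G.Adj x y → X.G.Adj x z → X.lab x y = X.lab x z)
    (hval : ∀ x y, X.G.Adj x y → (H.neighborSet (X.lab x y)).ncard = m) :
    IsCombCovering (stepLG H X).G X.G (projLG H X) (m * m) := by
  refine ⟨fun x y h => ((step_adj H X x y).mp h).1, ?_, ?_⟩
  · intro u v huv
    set A := H.neighborSet (X.lab u v) with hA
    set B := H.neighborSet (X.lab v u) with hB
    set S : Set (Sym2 (stepLG H X).V) :=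
      {e | e ∈ (stepLG H X).G.edgeSet ∧
        ∃ x y, e = s(x, y) ∧ projLG H X x = u ∧ projLG H X y = v} with hS
    have mkx : ∀ i ∈ A, ((u, i) : X.V × W) ∈ zigzagVerts X.G H X.lab :=
      fun i hi => ⟨v, huv, hi⟩
    have mky : ∀ j ∈ B, ((v, j) : X.V × W) ∈ zigzagVerts X.G H X.lab :=
      fun j hj => ⟨u, huv.symm, hj⟩
    let f : ↥A × ↥B → ↥S := fun p =>
      ⟨s((⟨(u, p.1.1), mkx p.1.1 p.1.2⟩ : (stepLG H X).V),
         (⟨(v, p.2.1), mky p.2.1 p.2.2⟩ : (stepLG H X).V)),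
        by
          refine ⟨?_, _, _, rfl, rfl, rfl⟩
          exact (step_adj H X _ _).mpr ⟨huv, p.1.2, p.2.2⟩⟩
    have hbij : Function.Bijective f := by
      constructor
      · rintro ⟨⟨i, hi⟩, ⟨j, hj⟩⟩ ⟨⟨i', hi'⟩, ⟨j', hj'⟩⟩ hf
        replace hf := Sym2.eq_iff.mp (congrArg Subtype.val hf)
        rcases hf with ⟨h1, h2⟩ | ⟨h1, h2⟩
        · have h1' := congrArg (fun q => q.val.2) h1
          have h2' := congrArg (fun q => q.val.2) h2
          simp only at h1' h2'
          simp [h1', h2']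
        · have h1' := congrArg (fun q => q.val.1) h1
          simp only at h1'
          exact absurd h1' huv.ne
      · rintro ⟨e, hE, x, y, rfl, hx, hy⟩
        have hadj : (stepLG H X).G.Adj x y := hE
        rw [step_adj] at hadj
        obtain ⟨hG, hix, hjy⟩ := hadj
        simp only [projLG] at hx hy
        subst hx
        subst hy
        refine ⟨⟨⟨x.val.2, hix⟩, ⟨y.val.2, hjy⟩⟩, ?_⟩
        apply Subtype.ext
        simp only [f]
        congr 1 <;> exact Subtype.ext Prod.mk.eta
    have hcA : Nat.card ↥A = m := by
      rw [Nat.card_coe_set_eq]; exact hval u v huv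
    have hcB : Nat.card ↥B = m := by
      rw [Nat.card_coe_set_eq]; exact hval v u huv.symm
    calc S.ncard = Nat.card ↥S := (Nat.card_coe_set_eq S).symm
      _ = Nat.card (↥A × ↥B) := (Nat.card_eq_of_bijective f hbij).symm
      _ = m * m := by rw [Nat.card_prod, hcA, hcB]
  · intro x y hxy v hadj
    simp only [projLG] at hxy hadj
    have key : ∀ z : (stepLG H X).V, z.val.1 = x.val.1 →
        (stepLG H X).G.neighborSet z ∩ (projLG H X) ⁻¹' {v} =
          {q : (stepLG H X).V | q.val.1 = v ∧ H.Adj (X.lab v x.val.1) q.val.2} := by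
      intro z hz
      have hz2 : H.Adj (X.lab z.val.1 v) z.val.2 := by
        obtain ⟨w, hw, hiw⟩ := z.2
        rw [hlc z.val.1 v w (hz ▸ hadj) hw]
        exact hiw
      ext q
      simp only [Set.mem_inter_iff, SimpleGraph.mem_neighborSet, Set.mem_preimage,
        Set.mem_singleton_iff, Set.mem_setOf_eq, step_adj, projLG]
      constructor
      · rintro ⟨⟨hG, h1, h2⟩, hq1⟩
        refine ⟨hq1, ?_⟩
        rw [← hq1, ← hz]
        exact h2
      · rintro ⟨hq1, h2⟩
        refine ⟨⟨?_, ?_, ?_⟩, hq1⟩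
        · rw [hz, hq1]; exact hadj
        · rw [hq1]; exact hz2
        · rw [hq1, hz]; exact h2
    rw [key x rfl, key y hxy.symm]

lemma good_step (X : LabGraph W) (m : ℕ)
    (hlc : ∀ x y z, X.G.Adj x y → X.G.Adj x z → X.lab x y = X.lab x z)
    (hval : ∀ x y, X.G.Adj x y → (H.neighborSet (X.lab x y)).ncard = m) :
    (∀ x y z, (stepLG H X).G.Adj x y → (stepLG H X).G.Adj x z →
        (stepLG H X).lab x y = (stepLG H X).lab x z) ∧
    (∀ x y, (stepLG H X).G.Adj x y →
        (H.neighborSet ((stepLG H X).lab x y)).ncard = m) := by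
  constructor
  · intro x y z hxy hxz
    rw [step_adj] at hxy hxz
    exact hlc x.val.1 y.val.1 z.val.1 hxy.1 hxz.1
  · intro x y hxy
    rw [step_adj] at hxy
    exact hval x.val.1 y.val.1 hxy.1

end Aux

/-- For locally finite `G`, `H` and a locally constant `H`-labeling
`α` with `val(h) = m` on the image of `α`, every projection `π_{n+1} : Δ_{n+1} → Δ_n`
in the zig-zag tower `Δ₁ = G`, `Δ_{n+1} = Δ_n ⋈_{α_n} H` is a combinatorial covering
map. -/
theorem zigzag_tower_comb_covering {V W : Type u} (G : SimpleGraph V) (H : SimpleGraph W)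
    (α : V → V → W)
    (hGlf : ∀ x : V, (G.neighborSet x).Finite) (hHlf : ∀ h : W, (H.neighborSet h).Finite)
    (hlc : ∀ x y z : V, G.Adj x y → G.Adj x z → α x y = α x z)
    (m : ℕ) (hval : ∀ x y : V, G.Adj x y → (H.neighborSet (α x y)).ncard = m) :
    ∀ n : ℕ, ∃ k : ℕ,
      IsCombCovering (towerLG H ⟨V, G, α⟩ (n + 1)).G (towerLG H ⟨V, G, α⟩ n).G
        (projLG H (towerLG H ⟨V, G, α⟩ n)) k := by
  have good : ∀ n : ℕ,
      (∀ x y z, (towerLG H ⟨V, G, α⟩ n).G.Adj x y → (towerLG H ⟨V, G, α⟩ n).G.Adj x z →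
        (towerLG H ⟨V, G, α⟩ n).lab x y = (towerLG H ⟨V, G, α⟩ n).lab x z) ∧
      (∀ x y, (towerLG H ⟨V, G, α⟩ n).G.Adj x y →
        (H.neighborSet ((towerLG H ⟨V, G, α⟩ n).lab x y)).ncard = m) := by
    intro n
    induction n with
    | zero => exact ⟨hlc, hval⟩
    | succ k ih => exact good_step H (towerLG H ⟨V, G, α⟩ k) m ih.1 ih.2
  intro n
  exact ⟨m * m, step_comb_covering H (towerLG H ⟨V, G, α⟩ n) m (good n).1 (good n).2⟩
end
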